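/- Let G and H be loopless weakly connected digraphs, α, β : G → H homomorphisms, q ∈ V(G), and let Q be a walk from α(q) to β(q) that is \bar H-realizable for α, β, q. Then Q is H-realizable for α, β, q if and only if Q is orientation compatible, i.e., for every vertex v ∈ V(G) and every walk W_v from q to v in G, the reduced walk α(W_v)⁻¹ · Q · β(W_v) satisfies the zigzag condition for v. -/

import Mathlib

namespace HRecoloring

/-- A digraph: a vertex type together with an arc relation. -/
structure Dgraph (V : Type) where
  Adj : V → V → Prop

variable {V X : Type}

/-- Adjacency in the underlying undirected graph. -/
def Dgraph.UAdj (G : Dgraph V) (u v : V) : Prop := G.Adj u v ∨ G.Adj v u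

/-- A digraph is loopless if it has no arc `v → v`. -/
def Dgraph.Loopless (G : Dgraph V) : Prop := ∀ v, ¬ G.Adj v v

/-- A digraph is reflexive if `v → v` for every vertex `v`. -/
def Dgraph.IsReflexive (G : Dgraph V) : Prop := ∀ v, G.Adj v v

/-- A symmetric digraph, which we identify with an undirected graph. -/
def Dgraph.IsSymmetric (G : Dgraph V) : Prop := ∀ u v, G.Adj u v → G.Adj v u

/-- The underlying undirected graph, as a symmetric digraph. -/
def Dgraph.usym (G : Dgraph V) : Dgraph V := ⟨fun u v => G.UAdj u v⟩

/-- A (di)graph homomorphism. -/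
def IsHom (G : Dgraph V) (H : Dgraph X) (f : V → X) : Prop :=
  ∀ ⦃u v⦄, G.Adj u v → H.Adj (f u) (f v)

/-- A walk from `a` to `b`, encoded by its list of successive vertices.
A walk in a digraph is a walk in its underlying undirected graph. -/
def IsWalk (G : Dgraph V) (a b : V) (l : List V) : Prop :=
  l ≠ [] ∧ l.head? = some a ∧ l.getLast? = some b ∧ l.Chain' G.UAdj

/-- Weak connectivity. -/
def Dgraph.WConn (G : Dgraph V) : Prop := ∀ u v : V, ∃ l, IsWalk G u v l

/-- Concatenation of two walks sharing an endpoint. -/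
def wcomp (l₁ l₂ : List V) : List V := l₁ ++ l₂.tail

/-- Number of edges of a walk. -/
def wlen (l : List V) : ℕ := l.length - 1

/-- One reduction step on walks: delete a backtracking pair `(x y)(y x)` or a
one-edge loop step `(x x)`. -/
def RStep (l l' : List V) : Prop :=
  (∃ (p s : List V) (x y : V), l = p ++ [x, y, x] ++ s ∧ l' = p ++ [x] ++ s) ∨
  (∃ (p s : List V) (x : V), l = p ++ [x, x] ++ s ∧ l' = p ++ [x] ++ s)

/-- Equality of walks in the fundamental groupoid `π(H)`: the equivalence
generated by reduction steps (two walks are equal in `π(H)` iff they reduce to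
the same reduced walk). -/
def PiEq (l l' : List V) : Prop := Relation.EqvGen RStep l l'

/-- A walk is reduced if no reduction step applies to it. -/
def IsReduced (l : List V) : Prop := ∀ l', ¬ RStep l l'

/-- A closed walk is cyclically reduced if it is reduced and its first and last
edges are not inverses of each other. -/
def IsCycReduced (l : List V) : Prop :=
  IsReduced l ∧ ∃ h : 2 ≤ l.length,
    l.get ⟨1, by omega⟩ ≠ l.get ⟨l.length - 2, by omega⟩

/-- `n`-fold concatenation of a closed walk `R` based at `h`. -/
def witer (R : List V) (h : V) : ℕ → List V
  | 0 => [h]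
  | n + 1 => wcomp R (witer R h n)

/-- `Rⁿ` for an integer `n`, for a closed walk `R` based at `h`; for `n < 0`
this is the `|n|`-fold concatenation of the reversed walk `R⁻¹`. -/
def zpowWalk (R : List V) (h : V) (n : ℤ) : List V :=
  if 0 ≤ n then witer R h n.toNat else witer R.reverse h (-n).toNat

/-- A walk is symmetric if every edge it traverses is a symmetric arc. -/
def IsSymWalk (H : Dgraph X) (l : List X) : Prop :=
  l.Chain' fun a b => H.Adj a b ∧ H.Adj b a

/-- The conjugated walk `α(W)⁻¹ · Q · β(W)`. -/
def conj (α β : V → X) (Wl : List V) (Q : List X) : List X :=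
  wcomp (wcomp (Wl.map α).reverse Q) (Wl.map β)

/-- Topological validity of a walk `Q` from `α q` to `β q`:
`β(C) = Q⁻¹ · α(C) · Q` in `π(H)` for every closed walk `C` at `q`. -/
def TopValid (G : Dgraph V) (H : Dgraph X) (α β : V → X) (q : V) (Q : List X) : Prop :=
  ∀ C : List V, IsWalk G q q C →
    PiEq (C.map β) (wcomp (wcomp Q.reverse (C.map α)) Q)

/-- IN-zigzag pattern `a₁ ← a₂ → a₃ ← … ← a_{n-1} → a_n`. -/
def INCompatible (H : Dgraph X) (l : List X) : Prop :=
  ∀ (i : ℕ) (h : i + 1 < l.length),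
    if i % 2 = 0 then H.Adj (l.get ⟨i + 1, h⟩) (l.get ⟨i, by omega⟩)
    else H.Adj (l.get ⟨i, by omega⟩) (l.get ⟨i + 1, h⟩)

/-- OUT-zigzag pattern `a₁ → a₂ ← a₃ → … → a_{n-1} ← a_n`. -/
def OUTCompatible (H : Dgraph X) (l : List X) : Prop :=
  ∀ (i : ℕ) (h : i + 1 < l.length),
    if i % 2 = 0 then H.Adj (l.get ⟨i, by omega⟩) (l.get ⟨i + 1, h⟩)
    else H.Adj (l.get ⟨i + 1, h⟩) (l.get ⟨i, by omega⟩)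

/-- A vertex is of type IN if it has an in-neighbor. -/
def TypeIN (G : Dgraph V) (v : V) : Prop := ∃ u, G.Adj u v

/-- A vertex is of type OUT if it has an out-neighbor. -/
def TypeOUT (G : Dgraph V) (v : V) : Prop := ∃ u, G.Adj v u

/-- A vertex is of type SYM if it is of type IN and of type OUT. -/
def TypeSYM (G : Dgraph V) (v : V) : Prop := TypeIN G v ∧ TypeOUT G v

/-- The zigzag condition for the vertex `v`. -/
def Zigzag (G : Dgraph V) (H : Dgraph X) (v : V) (l : List X) : Prop :=
  (TypeIN G v → INCompatible H l) ∧ (TypeOUT G v → OUTCompatible H l)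

/-- A recoloring sequence: a nonempty sequence of homomorphisms in which
consecutive homomorphisms differ on exactly one vertex. -/
def IsRecolSeq (G : Dgraph V) (H : Dgraph X) (σs : List (V → X)) : Prop :=
  σs ≠ [] ∧ (∀ σ ∈ σs, IsHom G H σ) ∧ σs.Chain' fun σ σ' => ∃! u, σ u ≠ σ' u

/-- The monochromatic neighborhood property: whenever a vertex changes its
color, all of its neighbors (in the underlying undirected graph) have one
common color. -/
def MonoNbhd (G : Dgraph V) (σs : List (V → X)) : Prop :=
  σs.Chain' fun σ σ' => ∀ v, σ v ≠ σ' v → ∃ h, ∀ w, G.UAdj v w → σ w = h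

/-- `VWalk G v σs S`: `S` is the vertex walk `S(v)` of the recoloring sequence
`σs`; each color change of `v` from `a` to `b`, while all neighbors of `v` are
colored `h`, contributes the two edges `(a h)(h b)`. -/
inductive VWalk (G : Dgraph V) (v : V) : List (V → X) → List X → Prop
  | single (σ : V → X) : VWalk G v [σ] [σ v]
  | stay {σ σ' : V → X} {rest : List (V → X)} {l : List X} :
      σ v = σ' v → VWalk G v (σ' :: rest) l → VWalk G v (σ :: σ' :: rest) l
  | move {σ σ' : V → X} {rest : List (V → X)} {l : List X} (h : X) :
      σ v ≠ σ' v → (∀ w, G.UAdj v w → σ w = h) →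
      VWalk G v (σ' :: rest) l → VWalk G v (σ :: σ' :: rest) (σ v :: h :: l)

/-- `H`-realizability of a walk `Q` via recoloring sequences satisfying the
monochromatic neighborhood property: `Q = S(q)` in `π(H)`. -/
def MRealizable (G : Dgraph V) (H : Dgraph X) (α β : V → X) (q : V) (Q : List X) : Prop :=
  ∃ (σs : List (V → X)) (Sq : List X),
    IsRecolSeq G H σs ∧ σs.head? = some α ∧ σs.getLast? = some β ∧
    MonoNbhd G σs ∧ VWalk G q σs Sq ∧ PiEq Sq Q

/-- Orientation compatibility of a walk `Q`: every generated vertex walk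
satisfies the zigzag condition. -/
def OrientCompatible (G : Dgraph V) (H : Dgraph X) (α β : V → X) (q : V) (Q : List X) : Prop :=
  ∀ (v : V) (Wl : List V), IsWalk G q v Wl →
    ∀ S : List X, IsReduced S → PiEq (conj α β Wl Q) S → Zigzag G H v S

/-- Hom₁-adjacency: the homomorphisms differ on exactly one vertex and, for
every arc `x → y` of `G`, both `φ x → ψ y` and `ψ x → φ y` are arcs of `H`. -/
def Hom1Adj (G : Dgraph V) (H : Dgraph X) (φ ψ : V → X) : Prop :=
  (∃! u, φ u ≠ ψ u) ∧ ∀ ⦃x y⦄, G.Adj x y → H.Adj (φ x) (ψ y) ∧ H.Adj (ψ x) (φ y)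

/-- A recoloring sequence in the Hom₁ sense (digraphs). -/
def Hom1Seq (G : Dgraph V) (H : Dgraph X) (σs : List (V → X)) : Prop :=
  σs ≠ [] ∧ (∀ σ ∈ σs, IsHom G H σ) ∧ σs.Chain' (Hom1Adj G H)

/-- A recoloring sequence in which each step recolors exactly one vertex to an
adjacent color (the Hom₁ sense for reflexive undirected graphs). -/
def AdjRecolSeq (G : Dgraph V) (H : Dgraph X) (σs : List (V → X)) : Prop :=
  σs ≠ [] ∧ (∀ σ ∈ σs, IsHom G H σ) ∧
  σs.Chain' fun σ σ' => (∃! u, σ u ≠ σ' u) ∧ ∀ u, σ u ≠ σ' u → H.Adj (σ u) (σ' u)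

/-- The push-or-pull property: whenever a vertex changes its color from `a` to
`b`, every neighbor of that vertex has color `a` or `b`. -/
def PushOrPull (G : Dgraph V) (σs : List (V → X)) : Prop :=
  σs.Chain' fun σ σ' => ∀ u, σ u ≠ σ' u → ∀ w, G.UAdj u w → σ w = σ u ∨ σ w = σ' u

/-- The walk of successive colors of `v` along a recoloring sequence. -/
def colorWalk (σs : List (V → X)) (v : V) : List X := σs.map fun σ => σ v

/-- `H`-realizability via recoloring sequences (reflexive undirected Hom₁
sense) satisfying the push-or-pull property. -/
def PRealizable (G : Dgraph V) (H : Dgraph X) (α β : V → X) (q : V) (Q : List X) : Prop :=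
  ∃ σs : List (V → X), AdjRecolSeq G H σs ∧ σs.head? = some α ∧ σs.getLast? = some β ∧
    PushOrPull G σs ∧ PiEq (colorWalk σs q) Q

/-- `H`-realizability via Hom₁ recoloring sequences of digraphs satisfying the
push-or-pull property. -/
def DRealizable (G : Dgraph V) (H : Dgraph X) (α β : V → X) (q : V) (Q : List X) : Prop :=
  ∃ σs : List (V → X), Hom1Seq G H σs ∧ σs.head? = some α ∧ σs.getLast? = some β ∧
    PushOrPull G σs ∧ PiEq (colorWalk σs q) Q

/-- `H` contains no 4-cycle of algebraic girth 0 as a subgraph (neither of the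
two orientations of the 4-cycle with two forward and two backward arcs). -/
def NoZeroGirthC4 (H : Dgraph X) : Prop :=
  ∀ a b c d : X, a ≠ b → a ≠ c → a ≠ d → b ≠ c → b ≠ d → c ≠ d →
    ¬(H.Adj a b ∧ H.Adj b d ∧ H.Adj a c ∧ H.Adj c d) ∧
    ¬(H.Adj a b ∧ H.Adj d b ∧ H.Adj a c ∧ H.Adj d c)

/-- `H` contains no triangle of algebraic girth 1 as a subgraph. -/
def NoOneGirthTriangle (H : Dgraph X) : Prop :=
  ∀ x y z : X, x ≠ y → y ≠ z → x ≠ z → ¬(H.Adj x y ∧ H.Adj y z ∧ H.Adj x z)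

/-- A path in the reconfiguration graph `R_H(G)` from `α` to `β`. -/
def IsRPath (G : Dgraph V) (H : Dgraph X) (α β : V → X) (L : List (V → X)) : Prop :=
  L ≠ [] ∧ L.head? = some α ∧ L.getLast? = some β ∧
  (∀ σ ∈ L, IsHom G H σ) ∧ L.Chain' fun φ ψ => ∃! u, φ u ≠ ψ u

/-- A path in the graph `Hom₁(G, H)` from `α` to `β`. -/
def IsHom1Path (G : Dgraph V) (H : Dgraph X) (α β : V → X) (L : List (V → X)) : Prop :=
  L ≠ [] ∧ L.head? = some α ∧ L.getLast? = some β ∧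
  (∀ σ ∈ L, IsHom G H σ) ∧ L.Chain' (Hom1Adj G H)

/-- The set of reduced walks `Q` from `α q` to `β q` that generate symmetric
vertex walks on `V'` with the system of walks `Wf`. -/
def SymGenSet (H : Dgraph X) (α β : V → X) (q : V)
    (V' : Set V) (Wf : V → List V) : Set (List X) :=
  {Q | IsWalk H (α q) (β q) Q ∧ IsReduced Q ∧
    ∀ v ∈ V', ∀ S : List X, IsReduced S → PiEq (conj α β (Wf v) Q) S → IsSymWalk H S}

/-- The set of orientation-compatible walks for `q` and the system `Uf`. -/
def OCSet (G : Dgraph V) (H : Dgraph X) (α β : V → X) (q : V)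
    (Uf : V → List V) : Set (List X) :=
  {Q | IsWalk H (α q) (β q) Q ∧ IsReduced Q ∧ Even (wlen Q) ∧
    ∀ (v : V) (S : List X), IsReduced S → PiEq (conj α β (Uf v) Q) S → Zigzag G H v S}

/-- The set `Π_q` of walks from `α q` to `β q` that are `H`-realizable via
recoloring sequences satisfying the monochromatic neighborhood property. -/
def MRealSet (G : Dgraph V) (H : Dgraph X) (α β : V → X) (q : V) : Set (List X) :=
  {Q | IsWalk H (α q) (β q) Q ∧ IsReduced Q ∧ MRealizable G H α β q Q}

/-- The set of walks from `α q` to `β q` that are `H`-realizable via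
recoloring sequences satisfying the push-or-pull property. -/
def PRealSet (G : Dgraph V) (H : Dgraph X) (α β : V → X) (q : V) : Set (List X) :=
  {Q | IsWalk H (α q) (β q) Q ∧ IsReduced Q ∧ PRealizable G H α β q Q}

/-- Ceiling division on natural numbers. -/
def cdiv (a b : ℕ) : ℕ := (a + b - 1) / b

/-! ### Auxiliary development -/

section Aux
variable {V X : Type}

noncomputable local instance (priority := low) (Y : Type) : DecidableEq Y :=
  Classical.typeDecidableEq Y

theorem PiEq.rfl (l : List X) : PiEq l l := Relation.EqvGen.refl l

theorem PiEq.symm {l l' : List X} (h : PiEq l l') : PiEq l' l := Relation.EqvGen.symm _ _ h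

theorem PiEq.trans {a b c : List X} (h : PiEq a b) (h' : PiEq b c) : PiEq a c :=
  Relation.EqvGen.trans _ _ _ h h'

theorem PiEq.of_rstep {l l' : List X} (h : RStep l l') : PiEq l l' :=
  Relation.EqvGen.rel _ _ h

theorem RStep.append_left {l l' : List X} (c : List X) (h : RStep l l') :
    RStep (c ++ l) (c ++ l') := by
  rcases h with ⟨p, s, x, y, h1, h2⟩ | ⟨p, s, x, h1, h2⟩
  · exact Or.inl ⟨c ++ p, s, x, y, by simp [h1], by simp [h2]⟩
  · exact Or.inr ⟨c ++ p, s, x, by simp [h1], by simp [h2]⟩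

theorem RStep.append_right {l l' : List X} (c : List X) (h : RStep l l') :
    RStep (l ++ c) (l' ++ c) := by
  rcases h with ⟨p, s, x, y, h1, h2⟩ | ⟨p, s, x, h1, h2⟩
  · exact Or.inl ⟨p, s ++ c, x, y, by simp [h1], by simp [h2]⟩
  · exact Or.inr ⟨p, s ++ c, x, by simp [h1], by simp [h2]⟩

theorem PiEq.append_left (c : List X) {l l' : List X} (h : PiEq l l') :
    PiEq (c ++ l) (c ++ l') := by
  induction h with
  | rel a b hab => exact PiEq.of_rstep (hab.append_left c)
  | refl a => exact PiEq.rfl _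
  | symm a b _ ih => exact ih.symm
  | trans a b c' _ _ ih1 ih2 => exact ih1.trans ih2

theorem PiEq.append_right (c : List X) {l l' : List X} (h : PiEq l l') :
    PiEq (l ++ c) (l' ++ c) := by
  induction h with
  | rel a b hab => exact PiEq.of_rstep (hab.append_right c)
  | refl a => exact PiEq.rfl _
  | symm a b _ ih => exact ih.symm
  | trans a b c' _ _ ih1 ih2 => exact ih1.trans ih2

theorem PiEq.infix (c d : List X) {l l' : List X} (h : PiEq l l') :
    PiEq (c ++ l ++ d) (c ++ l' ++ d) := by
  simpa [List.append_assoc] using ((h.append_right d).append_left c)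

theorem pieq_of_rtg {l l' : List X} (h : Relation.ReflTransGen RStep l l') : PiEq l l' := by
  induction h with
  | refl => exact PiEq.rfl _
  | tail _ hstep ih => exact ih.trans (PiEq.of_rstep hstep)

theorem rtg_append_right {l l' : List X} (c : List X)
    (h : Relation.ReflTransGen RStep l l') :
    Relation.ReflTransGen RStep (l ++ c) (l' ++ c) := by
  induction h with
  | refl => exact Relation.ReflTransGen.refl
  | tail _ hstep ih => exact ih.tail (hstep.append_right c)

/-! ### Reduced words -/

def Red : List X → Prop
  | x :: y :: l => x ≠ y ∧ (∀ z ∈ l.head?, x ≠ z) ∧ Red (y :: l)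
  | _ => True

@[simp] theorem red_nil : Red ([] : List X) := trivial

@[simp] theorem red_single (x : X) : Red [x] := trivial

theorem red_cons_iff (x y : X) (l : List X) :
    Red (x :: y :: l) ↔ x ≠ y ∧ (∀ z ∈ l.head?, x ≠ z) ∧ Red (y :: l) := Iff.rfl

theorem Red.of_cons {x : X} {l : List X} (h : Red (x :: l)) : Red l := by
  cases l with
  | nil => trivial
  | cons y t => exact ((red_cons_iff _ _ _).1 h).2.2

theorem red_append_right {A l : List X} (h : Red (A ++ l)) : Red l := by
  induction A with
  | nil => exact h
  | cons a A ih => exact ih (Red.of_cons h)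

theorem Red.ne_adj {A B : List X} {x y : X} (h : Red (A ++ x :: y :: B)) : x ≠ y :=
  ((red_cons_iff _ _ _).1 (red_append_right h)).1

theorem Red.ne_skip {A B : List X} {x y z : X} (h : Red (A ++ x :: y :: z :: B)) : x ≠ z := by
  have h' := red_append_right (A := A) h
  exact ((red_cons_iff _ _ _).1 h').2.1 z (by simp)

theorem isReduced_iff_red (l : List X) : IsReduced l ↔ Red l := by
  constructor
  · intro h
    by_contra hnr
    suffices hs : ∃ l', RStep l l' by
      rcases hs with ⟨l', hl'⟩; exact h l' hl'
    clear h
    induction l with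
    | nil => exact absurd trivial hnr
    | cons x t ih =>
      cases t with
      | nil => exact absurd trivial hnr
      | cons y t =>
        by_cases hxy : x = y
        · subst hxy
          exact ⟨x :: t, Or.inr ⟨[], t, x, rfl, rfl⟩⟩
        · cases t with
          | nil => exact absurd (by simp [red_cons_iff, hxy]) hnr
          | cons z t2 =>
            by_cases hxz : x = z
            · subst hxz
              exact ⟨x :: t2, Or.inl ⟨[], t2, x, y, by simp, by simp⟩⟩
            · have hny : ¬ Red (y :: z :: t2) := by
                intro hr
                exact hnr ((red_cons_iff _ _ _).2 ⟨hxy, by simp [hxz], hr⟩)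
              rcases ih hny with ⟨m, hm⟩
              exact ⟨x :: m, hm.append_left [x]⟩
  · intro h l' hstep
    rcases hstep with ⟨p, s, x, y, h1, _⟩ | ⟨p, s, x, h1, _⟩
    · rw [h1] at h
      exact Red.ne_skip (A := p) (B := s) (by simpa using h) rfl
    · rw [h1] at h
      exact Red.ne_adj (A := p) (B := s) (by simpa using h) rfl

/-! ### The normalizer -/

noncomputable def push (x : X) : List X → List X
  | [] => [x]
  | [y] => if x = y then [y] else [x, y]
  | y :: z :: t => if x = y then y :: z :: t else if x = z then z :: t else x :: y :: z :: t

@[simp] theorem push_nil (x : X) : push x ([] : List X) = [x] := rfl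

theorem push_single (x y : X) : push x [y] = if x = y then [y] else [x, y] := rfl

theorem push_cons2 (x y z : X) (t : List X) :
    push x (y :: z :: t) =
      if x = y then y :: z :: t else if x = z then z :: t else x :: y :: z :: t := rfl

theorem push_head (x : X) (s : List X) : ∃ u, push x s = x :: u := by
  match s with
  | [] => exact ⟨[], rfl⟩
  | [y] =>
    rw [push_single]
    by_cases h : x = y
    · subst h; simp
    · simp [h]
  | y :: z :: t =>
    rw [push_cons2]
    by_cases h1 : x = y
    · subst h1; simp
    · by_cases h2 : x = z
      · subst h2; simp [h1]
      · simp [h1, h2]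

theorem Red.push {x : X} {s : List X} (h : Red s) : Red (push x s) := by
  match s with
  | [] => simp
  | [y] =>
    rw [push_single]
    by_cases hxy : x = y
    · simp [hxy]
    · simp [hxy, red_cons_iff]
  | y :: z :: t =>
    rw [push_cons2]
    by_cases h1 : x = y
    · simp [h1, h]
    · by_cases h2 : x = z
      · rw [if_neg h1, if_pos h2]; exact h.of_cons
      · rw [if_neg h1, if_neg h2, red_cons_iff]
        exact ⟨h1, by simp [h2], h⟩

theorem push_push_self (x : X) (s : List X) : push x (push x s) = push x s := by
  rcases push_head x s with ⟨u, hu⟩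
  rw [hu]
  cases u with
  | nil => simp [push_single]
  | cons z t => simp [push_cons2]

theorem push_push_push (x y : X) {s : List X} (hred : Red (push x s)) :
    push x (push y (push x s)) = push x s := by
  by_cases hxy : y = x
  · subst hxy; rw [push_push_self, push_push_self]
  · rcases push_head x s with ⟨u, hu⟩
    rw [hu] at hred ⊢
    cases u with
    | nil =>
      rw [push_single, if_neg hxy, push_cons2, if_neg (fun h => hxy h.symm), if_pos rfl]
    | cons z t =>
      by_cases hyz : y = z
      · subst hyz
        rw [push_cons2, if_neg hxy, if_pos rfl]
        cases t with
        | nil =>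
          rw [push_single, if_neg (by rintro rfl; exact hxy rfl)]
        | cons w t2 =>
          have hxw : x ≠ w := ((red_cons_iff _ _ _).1 hred).2.1 w (by simp)
          rw [push_cons2, if_neg (by rintro rfl; exact hxy rfl), if_neg hxw]
      · rw [push_cons2, if_neg hxy, if_neg hyz, push_cons2,
          if_neg (fun h => hxy h.symm), if_pos rfl]

noncomputable def reduceAux : List X → List X → List X
  | s, [] => s
  | s, x :: l => reduceAux (push x s) l

@[simp] theorem reduceAux_nil (s : List X) : reduceAux s [] = s := rfl

@[simp] theorem reduceAux_cons (s : List X) (x : X) (l : List X) :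
    reduceAux s (x :: l) = reduceAux (push x s) l := rfl

noncomputable def reduce (l : List X) : List X := (reduceAux [] l).reverse

theorem reduceAux_append (s l₁ l₂ : List X) :
    reduceAux s (l₁ ++ l₂) = reduceAux (reduceAux s l₁) l₂ := by
  induction l₁ generalizing s with
  | nil => rfl
  | cons x t ih => simp [ih]

theorem red_reduceAux (s l : List X) (h : Red s) : Red (reduceAux s l) := by
  induction l generalizing s with
  | nil => exact h
  | cons x t ih => exact ih _ h.push

theorem reduce_rstep {l l' : List X} (h : RStep l l') : reduce l = reduce l' := by
  rcases h with ⟨p, s, x, y, h1, h2⟩ | ⟨p, s, x, h1, h2⟩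
  · subst h1; subst h2
    unfold reduce
    rw [reduceAux_append, reduceAux_append, reduceAux_append, reduceAux_append]
    congr 1
    simp only [reduceAux_cons, reduceAux_nil]
    congr 1
    exact push_push_push x y ((red_reduceAux [] p trivial).push)
  · subst h1; subst h2
    unfold reduce
    rw [reduceAux_append, reduceAux_append, reduceAux_append, reduceAux_append]
    congr 1
    simp only [reduceAux_cons, reduceAux_nil]
    congr 1
    exact push_push_self x _

theorem reduce_pieq_eq {l l' : List X} (h : PiEq l l') : reduce l = reduce l' := by
  induction h with
  | rel a b hab => exact reduce_rstep hab
  | refl a => rfl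
  | symm a b _ ih => exact ih.symm
  | trans a b c _ _ ih1 ih2 => exact ih1.trans ih2

theorem reduceAux_red : ∀ (l s : List X), Red (s.reverse ++ l) → reduceAux s l = l.reverse ++ s := by
  intro l
  induction l with
  | nil => intro s _; simp
  | cons x t ih =>
    intro s h
    have hpush : push x s = x :: s := by
      match s with
      | [] => rfl
      | [y] =>
        have : y ≠ x := Red.ne_adj (A := []) (B := t) (by simpa using h)
        rw [push_single, if_neg (fun hh => this hh.symm)]
      | y :: z :: t2 =>
        have hrev : (y :: z :: t2).reverse ++ x :: t = t2.reverse ++ z :: y :: x :: t := by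
          simp
        rw [hrev] at h
        have h1 : y ≠ x := Red.ne_adj (A := t2.reverse ++ [z]) (B := t) (by simpa using h)
        have h2 : z ≠ x := Red.ne_skip (A := t2.reverse) (B := t) h
        rw [push_cons2, if_neg (fun hh => h1 hh.symm), if_neg (fun hh => h2 hh.symm)]
    rw [reduceAux_cons, hpush, ih (x :: s) (by simpa using h)]
    simp

theorem reduce_of_red {l : List X} (h : Red l) : reduce l = l := by
  unfold reduce
  rw [reduceAux_red l [] (by simpa using h)]
  simp

theorem rtg_reduce (l : List X) : Relation.ReflTransGen RStep l (reduce l) := by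
  induction l using List.reverseRecOn with
  | nil => simp only [reduce, reduceAux_nil, List.reverse_nil]; exact .refl
  | append_singleton l x ih =>
    refine Relation.ReflTransGen.trans (rtg_append_right [x] ih) ?_
    unfold reduce
    rw [reduceAux_append]
    simp only [reduceAux_cons, reduceAux_nil]
    set S := reduceAux [] l with hS
    match hs : S with
    | [] => simp only [push_nil, List.reverse_nil, List.nil_append, List.reverse_cons]; exact .refl
    | [y] =>
      rw [push_single]
      by_cases hxy : x = y
      · subst hxy
        rw [if_pos rfl]
        exact Relation.ReflTransGen.single (Or.inr ⟨[], [], x, rfl, rfl⟩)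
      · rw [if_neg hxy, show (x :: [y]).reverse = [y] ++ [x] from by simp]
        exact .refl
    | y :: z :: t =>
      rw [push_cons2]
      by_cases h1 : x = y
      · subst h1
        rw [if_pos rfl]
        refine Relation.ReflTransGen.single (Or.inr ⟨t.reverse ++ [z], [], x, by simp, by simp⟩)
      · by_cases h2 : x = z
        · subst h2
          rw [if_neg h1]
          rw [if_pos rfl]
          refine Relation.ReflTransGen.single (Or.inl ⟨t.reverse, [], x, y, by simp, by simp⟩)
        · rw [if_neg h1, if_neg h2]
          rw [show (x :: y :: z :: t).reverse = (y :: z :: t).reverse ++ [x] from by simp]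

theorem pieq_reduce (l : List X) : PiEq l (reduce l) := pieq_of_rtg (rtg_reduce l)

theorem reduced_eq_reduce {l S : List X} (h : PiEq l S) (hS : IsReduced S) : S = reduce l := by
  have h1 : reduce S = reduce l := reduce_pieq_eq h.symm
  rw [← h1, reduce_of_red ((isReduced_iff_red S).1 hS)]

theorem rtg_of_pieq_reduced {l S : List X} (h : PiEq l S) (hS : IsReduced S) :
    Relation.ReflTransGen RStep l S := by
  rw [reduced_eq_reduce h hS]; exact rtg_reduce l

end Aux
/-! ### VWalk machinery -/

section VW
variable {V X : Type} {G : Dgraph V} {v : V}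

theorem vwalk_single_iff (σ : V → X) (S : List X) :
    VWalk G v [σ] S ↔ S = [σ v] := by
  constructor
  · intro h; cases h; rfl
  · rintro rfl; exact VWalk.single σ

theorem VWalk.ne_nil {σs : List (V → X)} {S : List X} (h : VWalk G v σs S) : S ≠ [] := by
  induction h with
  | single => simp
  | stay _ _ ih => exact ih
  | move _ _ _ _ _ => simp

theorem VWalk.σs_ne_nil {σs : List (V → X)} {S : List X} (h : VWalk G v σs S) : σs ≠ [] := by
  cases h <;> simp

theorem VWalk.head_eq {σs : List (V → X)} {S : List X} (h : VWalk G v σs S) :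
    S.head? = σs.head?.map (fun σ => σ v) := by
  induction h with
  | single σ => rfl
  | stay hst hw ih => rw [ih]; simp [hst]
  | move h₀ hne hnb hw ih => simp

theorem VWalk.last_eq {σs : List (V → X)} {S : List X} (h : VWalk G v σs S) :
    S.getLast? = σs.getLast?.map (fun σ => σ v) := by
  induction h with
  | single σ => rfl
  | @stay σ σ' rest l hst hw ih => rw [ih]; simp
  | @move σ σ' rest l h₀ hne hnb hw ih =>
      cases l with
      | nil => exact absurd rfl hw.ne_nil
      | cons a t =>
        rw [List.getLast?_cons_cons, List.getLast?_cons_cons, ih, List.getLast?_cons_cons]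

theorem vwalk_cons_inv {σ σ' : V → X} {rest : List (V → X)} {S : List X}
    (h : VWalk G v (σ :: σ' :: rest) S) :
    (σ v = σ' v ∧ VWalk G v (σ' :: rest) S) ∨
      (∃ h₀ l, σ v ≠ σ' v ∧ (∀ w, G.UAdj v w → σ w = h₀) ∧ VWalk G v (σ' :: rest) l ∧
        S = σ v :: h₀ :: l) := by
  cases h with
  | stay hst hw => exact Or.inl ⟨hst, hw⟩
  | move h₀ hne hnb hw => exact Or.inr ⟨h₀, _, hne, hnb, hw, rfl⟩

theorem vwalk_exists (v : V) :
    ∀ σs : List (V → X), σs ≠ [] → MonoNbhd G σs → ∃ S, VWalk G v σs S := by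
  intro σs
  induction σs with
  | nil => intro h; exact absurd rfl h
  | cons σ rest ih =>
    intro _ hm
    cases rest with
    | nil => exact ⟨[σ v], VWalk.single σ⟩
    | cons σ' rest' =>
      have hm' : MonoNbhd G (σ' :: rest') := hm.tail
      rcases ih (by simp) hm' with ⟨S, hS⟩
      by_cases hc : σ v = σ' v
      · exact ⟨S, VWalk.stay hc hS⟩
      · have hmono := (List.isChain_cons_cons.1 hm).1
        rcases hmono v hc with ⟨h₀, hh₀⟩
        exact ⟨σ v :: h₀ :: S, VWalk.move h₀ hc hh₀ hS⟩

/-- Transfer a vertex walk along pointwise agreement on the closed neighborhood. -/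
theorem vwalk_ext {L L' : List (V → X)} {S : List X}
    (h : VWalk G v L S)
    (hF : List.Forall₂ (fun σ σ' => σ v = σ' v ∧ ∀ w, G.UAdj v w → σ w = σ' w) L L') :
    VWalk G v L' S := by
  induction h generalizing L' with
  | single σ =>
    cases hF with
    | cons hσ hnil =>
      cases hnil
      rw [show σ v = _ from hσ.1]
      exact VWalk.single _
  | @stay σ σ' rest l hst hw ih =>
    cases hF with
    | cons hσ htail =>
      cases htail with
      | cons hσ' htail' =>
        exact VWalk.stay (by rw [← hσ.1, ← hσ'.1]; exact hst)
          (ih (List.Forall₂.cons hσ' htail'))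
  | @move σ σ' rest l h₀ hne hnb hw ih =>
    cases hF with
    | cons hσ htail =>
      cases htail with
      | cons hσ' htail' =>
        rw [show σ v = _ from hσ.1]
        exact VWalk.move h₀ (by rw [← hσ.1, ← hσ'.1]; exact hne)
          (fun w hw' => by rw [← hσ.2 w hw']; exact hnb w hw')
          (ih (List.Forall₂.cons hσ' htail'))

theorem vwalk_unique (hnb : ∃ w, G.UAdj v w) {L : List (V → X)} {S S' : List X}
    (h1 : VWalk G v L S) (h2 : VWalk G v L S') : S = S' := by
  induction h1 generalizing S' with
  | single σ => rw [(vwalk_single_iff σ S').1 h2]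
  | @stay σ σ' rest l hst hw ih =>
    rcases vwalk_cons_inv h2 with ⟨_, hw2⟩ | ⟨h₀, l2, hne, _, _, _⟩
    · exact ih hw2
    · exact absurd hst hne
  | @move σ σ' rest l h₀ hne hnb0 hw ih =>
    rcases vwalk_cons_inv h2 with ⟨hst, _⟩ | ⟨h₁, l2, _, hnb1, hw2, hS'⟩
    · exact absurd hst hne
    · rcases hnb with ⟨w₀, hw₀⟩
      have : h₀ = h₁ := by rw [← hnb0 w₀ hw₀, ← hnb1 w₀ hw₀]
      rw [hS', ← this, ih hw2]

/-- Gluing lemma, forward direction. -/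
theorem vwalk_glue_mp {v : V} :
    ∀ {M : List (V → X)} {S : List X}, VWalk G v M S →
      ∀ (P : List (V → X)) (ρ : V → X) (C : List (V → X)), M = P ++ ρ :: C →
      ∃ S₁ S₂, VWalk G v (P ++ [ρ]) S₁ ∧ VWalk G v (ρ :: C) S₂ ∧ S = S₁ ++ S₂.tail := by
  intro M S h
  induction h with
  | single σ =>
    intro P ρ C hM
    cases P with
    | nil =>
      rw [List.nil_append, List.cons_eq_cons] at hM
      rcases hM with ⟨rfl, hC⟩
      cases hC
      exact ⟨[σ v], [σ v], VWalk.single σ, VWalk.single σ, rfl⟩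
    | cons a t =>
      rw [List.cons_append, List.cons_eq_cons] at hM
      have := hM.2; simp at this
  | @stay σ σ' rest S hst hw ih =>
    intro P ρ C hM
    cases P with
    | nil =>
      rw [List.nil_append, List.cons_eq_cons] at hM
      rcases hM with ⟨rfl, hC⟩
      cases hC
      refine ⟨[σ v], S, VWalk.single σ, VWalk.stay hst hw, ?_⟩
      have hh := hw.head_eq
      cases S with
      | nil => exact absurd rfl hw.ne_nil
      | cons a t => simp at hh; simp [hh, hst]
    | cons τ P' =>
      rw [List.cons_append, List.cons_eq_cons] at hM
      rcases hM with ⟨rfl, hM'⟩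
      rcases ih P' ρ C hM' with ⟨S₁, S₂, hS₁, hS₂, hSeq⟩
      refine ⟨S₁, S₂, ?_, hS₂, hSeq⟩
      cases P' with
      | nil =>
        rw [List.nil_append, List.cons_eq_cons] at hM'
        exact VWalk.stay (σ' := ρ) (hM'.1 ▸ hst) hS₁
      | cons μ R =>
        rw [List.cons_append, List.cons_eq_cons] at hM'
        rw [List.cons_append] at hS₁ ⊢
        exact VWalk.stay (hM'.1 ▸ hst) hS₁
  | @move σ σ' rest S h₀ hne hnb hw ih =>
    intro P ρ C hM
    cases P with
    | nil =>
      rw [List.nil_append, List.cons_eq_cons] at hM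
      rcases hM with ⟨rfl, hC⟩
      cases hC
      exact ⟨[σ v], σ v :: h₀ :: S, VWalk.single σ, VWalk.move h₀ hne hnb hw, rfl⟩
    | cons τ P' =>
      rw [List.cons_append, List.cons_eq_cons] at hM
      rcases hM with ⟨rfl, hM'⟩
      rcases ih P' ρ C hM' with ⟨S₁, S₂, hS₁, hS₂, hSeq⟩
      refine ⟨σ v :: h₀ :: S₁, S₂, ?_, hS₂, by simp [hSeq]⟩
      cases P' with
      | nil =>
        rw [List.nil_append, List.cons_eq_cons] at hM'
        exact VWalk.move (σ' := ρ) h₀ (hM'.1 ▸ hne) hnb hS₁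
      | cons μ R =>
        rw [List.cons_append, List.cons_eq_cons] at hM'
        rw [List.cons_append] at hS₁ ⊢
        exact VWalk.move h₀ (hM'.1 ▸ hne) hnb hS₁

/-- Gluing lemma, reverse direction. -/
theorem vwalk_glue_mpr {v : V} :
    ∀ (P : List (V → X)) {ρ : V → X} {C : List (V → X)} {S₁ S₂ : List X},
      VWalk G v (P ++ [ρ]) S₁ → VWalk G v (ρ :: C) S₂ →
      VWalk G v (P ++ ρ :: C) (S₁ ++ S₂.tail) := by
  intro P
  induction P with
  | nil =>
    intro ρ C S₁ S₂ h1 h2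
    rw [List.nil_append] at h1
    rw [(vwalk_single_iff ρ S₁).1 h1]
    have hh := h2.head_eq
    cases S₂ with
    | nil => exact absurd rfl h2.ne_nil
    | cons a t => simp at hh; subst hh; simpa using h2
  | cons τ P' ih =>
    intro ρ C S₁ S₂ h1 h2
    rw [List.cons_append] at h1
    cases P' with
    | nil =>
      simp only [List.nil_append] at h1 ⊢
      rcases vwalk_cons_inv h1 with ⟨hst, hw⟩ | ⟨h₀, l, hne, hnb, hw, rfl⟩
      · rw [(vwalk_single_iff ρ _).1 hw]
        have hh := h2.head_eq
        cases S₂ with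
        | nil => exact absurd rfl h2.ne_nil
        | cons a t =>
          simp at hh; subst hh
          simpa using VWalk.stay hst h2
      · rw [(vwalk_single_iff ρ _).1 hw]
        have hh := h2.head_eq
        cases S₂ with
        | nil => exact absurd rfl h2.ne_nil
        | cons a t =>
          simp at hh; subst hh
          simpa using VWalk.move h₀ hne hnb h2
    | cons μ R =>
      rw [List.cons_append] at h1 ⊢
      rcases vwalk_cons_inv h1 with ⟨hst, hw⟩ | ⟨h₀, l, hne, hnb, hw, rfl⟩
      · have := ih (by rw [List.cons_append]; exact hw) h2
        rw [List.cons_append] at this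
        exact VWalk.stay hst this
      · have := ih (by rw [List.cons_append]; exact hw) h2
        rw [List.cons_append] at this
        exact VWalk.move h₀ hne hnb this

/-- Collapsing an initial stay step. -/
theorem vwalk_stay_collapse {ρ τ : V → X} {C : List (V → X)} {S : List X}
    (hst : ρ v = τ v) :
    VWalk G v (ρ :: τ :: C) S ↔ VWalk G v (τ :: C) S := by
  constructor
  · intro h
    rcases vwalk_cons_inv h with ⟨_, hw⟩ | ⟨h₀, l, hne, _, _, _⟩
    · exact hw
    · exact absurd hst hne
  · exact fun h => VWalk.stay hst h

end VW
/-! ### Per-edge homotopy and the fundamental lemma -/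

section Fund
variable {V X : Type} {G : Dgraph V} {H : Dgraph X}

theorem Dgraph.UAdj.symm' {a b : V} (h : G.UAdj a b) : G.UAdj b a := h.symm

theorem pieq_of_eq {l l' : List X} (h : l = l') : PiEq l l' := h ▸ PiEq.rfl l

theorem eq_cons_head {l : List X} {a : X} (h : l.head? = some a) : l = a :: l.tail := by
  cases l with
  | nil => simp at h
  | cons b t => simp at h; rw [h]; rfl

/-- The unique-change relation used in recoloring sequences. -/
abbrev UC (σ σ' : V → X) : Prop := ∃! u, σ u ≠ σ' u

theorem uc_stay {σ σ' : V → X} {u w : V} (h : UC σ σ') (hu : σ u ≠ σ' u) (hw : w ≠ u) :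
    σ w = σ' w := by
  rcases h with ⟨z, hz, huniq⟩
  by_contra hcon
  exact hw ((huniq w hcon).trans (huniq u hu).symm)

theorem vwalk_edge {u v : V} (huv : G.UAdj u v) (hne : u ≠ v) :
    ∀ {σs : List (V → X)} {Su Sv : List X} {σ₀ σN : V → X},
      σs.Chain' UC → VWalk G u σs Su → VWalk G v σs Sv →
      σs.head? = some σ₀ → σs.getLast? = some σN →
      PiEq Sv (σ₀ v :: σ₀ u :: (Su.tail ++ [σN v])) := by
  intro σs
  induction σs with
  | nil => intro Su Sv σ₀ σN _ hwu _ _ _; exact absurd rfl hwu.σs_ne_nil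
  | cons σ rest ih =>
    intro Su Sv σ₀ σN hch hwu hwv hhead hlast
    have hσ₀ : σ₀ = σ := by simp at hhead; exact hhead.symm
    rw [hσ₀]
    cases rest with
    | nil =>
      have hσN : σN = σ := by simp at hlast; exact hlast.symm
      rw [hσN]
      rw [(vwalk_single_iff _ _).1 hwu, (vwalk_single_iff _ _).1 hwv]
      exact (PiEq.of_rstep (Or.inl ⟨[], [], σ v, σ u, rfl, rfl⟩)).symm
    | cons σ' rest' =>
      have hch1 : UC σ σ' := (List.isChain_cons_cons.1 hch).1
      have hch' : (σ' :: rest').Chain' UC := (List.isChain_cons_cons.1 hch).2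
      have hlast' : (σ' :: rest').getLast? = some σN := by
        rw [← hlast]; simp
      rcases vwalk_cons_inv hwu with ⟨hu, hwu'⟩ | ⟨h₀, Su', hmu, hnbu, hwu', hSu⟩
      · rcases vwalk_cons_inv hwv with ⟨hv, hwv'⟩ | ⟨h₀, Sv', hmv, hnbv, hwv', hSv⟩
        · -- stay / stay
          have := ih hch' hwu' hwv' rfl hlast'
          rw [← hu, ← hv] at this
          exact this
        · -- v moves, u stays
          have hh₀ : h₀ = σ u := (hnbv u huv.symm').symm
          subst hh₀
          have IH := ih hch' hwu' hwv' rfl hlast'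
          have hSveq : Sv = [σ v, σ u] ++ Sv' := by rw [hSv]; rfl
          have step1 : PiEq Sv ([σ v, σ u] ++ (σ' v :: σ' u :: (Su.tail ++ [σN v]))) := by
            rw [hSveq]; exact PiEq.append_left _ IH
          have huu : σ' u = σ u := (uc_stay hch1 hmv (Ne.symm (fun h => hne h.symm))).symm
          have hstep : RStep ([σ v, σ u] ++ (σ' v :: σ' u :: (Su.tail ++ [σN v])))
              (σ v :: σ u :: (Su.tail ++ [σN v])) := by
            refine Or.inl ⟨[σ v], Su.tail ++ [σN v], σ u, σ' v, ?_, rfl⟩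
            simp [huu]
          exact step1.trans (PiEq.of_rstep hstep)
      · -- u moves, v stays
        have hh₀ : h₀ = σ v := (hnbu v huv).symm
        subst hh₀
        rcases vwalk_cons_inv hwv with ⟨hv, hwv'⟩ | ⟨h₁, Sv', hmv, hnbv, hwv', hSv⟩
        · have IH := ih hch' hwu' hwv' rfl hlast'
          have hSu' : Su' = σ' u :: Su'.tail := eq_cons_head (by rw [hwu'.head_eq]; rfl)
          have hIH' : PiEq Sv (σ v :: (Su' ++ [σN v])) := by
            rw [hSu']
            rw [← hv] at IH
            exact IH
          have hstep : RStep (σ v :: σ u :: (Su.tail ++ [σN v]))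
              (σ v :: (Su' ++ [σN v])) := by
            refine Or.inl ⟨[], Su' ++ [σN v], σ v, σ u, ?_, rfl⟩
            rw [hSu]
            simp
          exact hIH'.trans (PiEq.of_rstep hstep).symm
        · exact absurd ((uc_stay hch1 hmu (Ne.symm hne))) hmv

theorem conj_single (a b : V → X) (q : V) {Q : List X} (hQ : Q.head? = some (a q)) :
    conj a b [q] Q = Q := by
  simp only [conj, wcomp, List.map_cons, List.map_nil, List.reverse_cons, List.reverse_nil,
    List.nil_append, List.tail_cons, List.append_nil]
  exact (eq_cons_head hQ).symm

theorem conj_snoc (a b : V → X) {Wl : List V} (hWl : Wl ≠ []) (v : V) (Q : List X) :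
    conj a b (Wl ++ [v]) Q = a v :: (conj a b Wl Q ++ [b v]) := by
  simp only [conj, wcomp, List.map_append, List.map_cons, List.map_nil, List.reverse_append,
    List.reverse_cons, List.reverse_nil, List.nil_append, List.cons_append]
  rw [List.tail_append_singleton_of_ne_nil (by simpa using hWl : List.map b Wl ≠ [])]
  simp [List.append_assoc]

theorem vwalk_conj (hGll : G.Loopless) (q : V)
    {σs : List (V → X)} {σ₀ σN : V → X} {Sq : List X}
    (hch : σs.Chain' UC) (hm : MonoNbhd G σs)
    (hhead : σs.head? = some σ₀) (hlast : σs.getLast? = some σN)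
    (hq : VWalk G q σs Sq)
    (hnbr : ∀ w : V, ∃ w', G.UAdj w w') :
    ∀ (Wl : List V) (v : V), IsWalk G q v Wl → ∀ Sv, VWalk G v σs Sv →
      PiEq Sv (conj (fun w => σ₀ w) (fun w => σN w) Wl Sq) := by
  intro Wl
  induction Wl using List.reverseRecOn with
  | nil => intro v hW Sv _; exact absurd rfl hW.1
  | append_singleton l x ihl =>
    intro v hW Sv hSv
    have hvx : v = x := by
      have := hW.2.2.1
      simp at this
      first | exact this.symm | exact this
    subst hvx
    cases l with
    | nil =>
      have hq' : q = v := by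
        have := hW.2.1; simp at this
        first | exact this.symm | exact this
      subst hq'
      simp only [List.nil_append]
      rw [conj_single _ _ q (by rw [hq.head_eq, hhead]; rfl)]
      exact pieq_of_eq (vwalk_unique (hnbr q) hSv hq)
    | cons a' t =>
      have hlne : (a' :: t : List V) ≠ [] := by simp
      set u := (a' :: t).getLast hlne with hu
      have hWl' : IsWalk G q u (a' :: t) := by
        refine ⟨hlne, ?_, ?_, ?_⟩
        · rw [← hW.2.1]; simp
        · exact List.getLast?_eq_getLast_of_ne_nil hlne
        · have := hW.2.2.2
          exact (List.isChain_append.1 (show List.IsChain G.UAdj ((a' :: t) ++ [v]) from this)).1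
      have hadj : G.UAdj u v := by
        have hc := hW.2.2.2
        have hsp := (List.isChain_append.1
          (by simpa using hc : ((a' :: t) ++ [v]).Chain' G.UAdj)).2.2
        refine hsp u ?_ v (by simp)
        rw [List.getLast?_eq_getLast_of_ne_nil hlne]
        exact rfl
      have hune : u ≠ v := fun h => hGll v (by
        rw [h] at hadj; rcases hadj with h' | h' <;> exact h')
      rcases vwalk_exists u σs hq.σs_ne_nil hm with ⟨Su, hSu⟩
      have IH := ihl u hWl' Su hSu
      have hedge := vwalk_edge hadj hune hch hSu hSv hhead hlast
      have hSu0 : Su = σ₀ u :: Su.tail := eq_cons_head (by rw [hSu.head_eq, hhead]; rfl)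
      have hedge' : PiEq Sv ([σ₀ v] ++ Su ++ [σN v]) := by
        rw [show ([σ₀ v] ++ Su ++ [σN v] : List X) = σ₀ v :: σ₀ u :: (Su.tail ++ [σN v]) by
          conv_lhs => rw [hSu0]
          simp]
        exact hedge
      have hcongr : PiEq ([σ₀ v] ++ Su ++ [σN v])
          ([σ₀ v] ++ conj (fun w => σ₀ w) (fun w => σN w) (a' :: t) Sq ++ [σN v]) :=
        PiEq.infix _ _ IH
      rw [conj_snoc _ _ hlne]
      rw [show (σ₀ v :: (conj (fun w => σ₀ w) (fun w => σN w) (a' :: t) Sq ++ [σN v]) : List X)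
          = [σ₀ v] ++ conj (fun w => σ₀ w) (fun w => σN w) (a' :: t) Sq ++ [σN v] by simp]
      exact hedge'.trans hcongr

end Fund
/-! ### Alternating (zigzag) walks -/

section Alt
variable {V X : Type} {G : Dgraph V} {H : Dgraph X}

/-- Alternation predicate: `true` = IN-pattern, `false` = OUT-pattern. -/
def Alt (H : Dgraph X) : Bool → List X → Prop
  | t, a :: b :: l => (if t then H.Adj b a else H.Adj a b) ∧ Alt H (!t) (b :: l)
  | _, _ => True

@[simp] theorem alt_nil (t : Bool) : Alt H t ([] : List X) := trivial

@[simp] theorem alt_single (t : Bool) (x : X) : Alt H t [x] := trivial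

theorem alt_cons2 (t : Bool) (a b : X) (l : List X) :
    Alt H t (a :: b :: l) ↔ (if t then H.Adj b a else H.Adj a b) ∧ Alt H (!t) (b :: l) :=
  Iff.rfl

theorem incomp_cons (a : X) (l : List X) :
    INCompatible H (a :: l) ↔ (∀ b ∈ l.head?, H.Adj b a) ∧ OUTCompatible H l := by
  constructor
  · intro h
    refine ⟨?_, ?_⟩
    · intro b hb
      cases l with
      | nil => simp at hb
      | cons c t =>
        simp at hb
        subst hb
        have h0 := h 0 (by simp)
        rw [if_pos rfl] at h0
        simpa using h0
    · intro i hi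
      have hi' : (i + 1) + 1 < (a :: l).length := by simpa using Nat.succ_lt_succ hi
      have h1 := h (i + 1) hi'
      rcases Nat.even_or_odd i with he | ho
      · have e0 : i % 2 = 0 := Nat.even_iff.1 he
        rw [if_neg (by omega)] at h1
        rw [if_pos e0]
        simpa using h1
      · have e0 : i % 2 = 1 := Nat.odd_iff.1 ho
        rw [if_pos (by omega)] at h1
        rw [if_neg (by omega)]
        simpa using h1
  · rintro ⟨hb, hout⟩ i hi
    cases i with
    | zero =>
      rw [if_pos rfl]
      cases l with
      | nil => simp at hi
      | cons c t => simpa using hb c rfl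
    | succ j =>
      have hj : j + 1 < l.length := by simpa using hi
      have h1 := hout j hj
      rcases Nat.even_or_odd j with he | ho
      · have e0 : j % 2 = 0 := Nat.even_iff.1 he
        rw [if_pos e0] at h1
        rw [if_neg (by omega)]
        simpa using h1
      · have e0 : j % 2 = 1 := Nat.odd_iff.1 ho
        rw [if_neg (by omega)] at h1
        rw [if_pos (by omega)]
        simpa using h1

theorem outcomp_cons (a : X) (l : List X) :
    OUTCompatible H (a :: l) ↔ (∀ b ∈ l.head?, H.Adj a b) ∧ INCompatible H l := by
  constructor
  · intro h
    refine ⟨?_, ?_⟩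
    · intro b hb
      cases l with
      | nil => simp at hb
      | cons c t =>
        simp at hb
        subst hb
        have h0 := h 0 (by simp)
        rw [if_pos rfl] at h0
        simpa using h0
    · intro i hi
      have hi' : (i + 1) + 1 < (a :: l).length := by simpa using Nat.succ_lt_succ hi
      have h1 := h (i + 1) hi'
      rcases Nat.even_or_odd i with he | ho
      · have e0 : i % 2 = 0 := Nat.even_iff.1 he
        rw [if_neg (by omega)] at h1
        rw [if_pos e0]
        simpa using h1
      · have e0 : i % 2 = 1 := Nat.odd_iff.1 ho
        rw [if_pos (by omega)] at h1
        rw [if_neg (by omega)]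
        simpa using h1
  · rintro ⟨hb, hin⟩ i hi
    cases i with
    | zero =>
      rw [if_pos rfl]
      cases l with
      | nil => simp at hi
      | cons c t => simpa using hb c rfl
    | succ j =>
      have hj : j + 1 < l.length := by simpa using hi
      have h1 := hin j hj
      rcases Nat.even_or_odd j with he | ho
      · have e0 : j % 2 = 0 := Nat.even_iff.1 he
        rw [if_pos e0] at h1
        rw [if_neg (by omega)]
        simpa using h1
      · have e0 : j % 2 = 1 := Nat.odd_iff.1 ho
        rw [if_neg (by omega)] at h1
        rw [if_pos (by omega)]
        simpa using h1

theorem incompatible_nil : INCompatible H ([] : List X) := by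
  intro i hi; simp at hi

theorem incompatible_single (x : X) : INCompatible H [x] := by
  intro i hi; simp at hi

theorem outcompatible_nil : OUTCompatible H ([] : List X) := by
  intro i hi; simp at hi

theorem outcompatible_single (x : X) : OUTCompatible H [x] := by
  intro i hi; simp at hi

theorem compat_iff :
    ∀ l : List X, (INCompatible H l ↔ Alt H true l) ∧ (OUTCompatible H l ↔ Alt H false l) := by
  intro l
  induction l with
  | nil => exact ⟨⟨fun _ => trivial, fun _ => incompatible_nil⟩,
      ⟨fun _ => trivial, fun _ => outcompatible_nil⟩⟩
  | cons a l ih =>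
    cases l with
    | nil => exact ⟨⟨fun _ => trivial, fun _ => incompatible_single a⟩,
        ⟨fun _ => trivial, fun _ => outcompatible_single a⟩⟩
    | cons b m =>
      constructor
      · rw [incomp_cons, alt_cons2, if_pos rfl]
        rw [show (!true) = false from rfl]
        constructor
        · rintro ⟨h1, h2⟩
          exact ⟨by simpa using h1 b rfl, (ih.2).1 h2⟩
        · rintro ⟨h1, h2⟩
          exact ⟨by simpa using h1, (ih.2).2 h2⟩
      · rw [outcomp_cons, alt_cons2, if_neg (by simp)]
        rw [show (!false) = true from rfl]
        constructor
        · rintro ⟨h1, h2⟩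
          exact ⟨by simpa using h1 b rfl, (ih.1).1 h2⟩
        · rintro ⟨h1, h2⟩
          exact ⟨by simpa using h1, (ih.1).2 h2⟩

theorem alt_rstep3 (hHll : H.Loopless) :
    ∀ (p : List X) (t : Bool) (x y : X) (s : List X),
      Alt H t (p ++ [x, y, x] ++ s) → Alt H t (p ++ [x] ++ s) := by
  intro p
  induction p with
  | nil =>
    intro t x y s h
    simp only [List.nil_append] at h ⊢
    have h1 : Alt H (!!t) (x :: s) := h.2.2
    simpa using h1
  | cons c p ih =>
    intro t x y s h
    cases p with
    | nil =>
      simp only [List.nil_append, List.cons_append] at h ⊢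
      exact ⟨h.1, ih (!t) x y s h.2⟩
    | cons d p' =>
      simp only [List.cons_append] at h ⊢
      exact ⟨h.1, ih (!t) x y s h.2⟩

theorem alt_rstep2 (hHll : H.Loopless) :
    ∀ (p : List X) (t : Bool) (x : X) (s : List X),
      Alt H t (p ++ [x, x] ++ s) → Alt H t (p ++ [x] ++ s) := by
  intro p
  induction p with
  | nil =>
    intro t x s h
    exfalso
    have := h.1
    cases t <;> exact hHll x (by simpa using this)
  | cons c p ih =>
    intro t x s h
    cases p with
    | nil =>
      simp only [List.nil_append, List.cons_append] at h ⊢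
      exact ⟨h.1, ih (!t) x s h.2⟩
    | cons d p' =>
      simp only [List.cons_append] at h ⊢
      exact ⟨h.1, ih (!t) x s h.2⟩

theorem alt_rstep (hHll : H.Loopless) {l l' : List X} (hs : RStep l l') (t : Bool)
    (h : Alt H t l) : Alt H t l' := by
  rcases hs with ⟨p, s, x, y, h1, h2⟩ | ⟨p, s, x, h1, h2⟩
  · subst h1; subst h2; exact alt_rstep3 hHll p t x y s h
  · subst h1; subst h2; exact alt_rstep2 hHll p t x s h

theorem alt_rtg (hHll : H.Loopless) {l l' : List X}
    (hs : Relation.ReflTransGen RStep l l') (t : Bool) (h : Alt H t l) : Alt H t l' := by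
  induction hs with
  | refl => exact h
  | tail _ hstep ih => exact alt_rstep hHll hstep t ih

end Alt
/-! ### Raw vertex walks are zigzags; forward direction -/

section Fwd
variable {V X : Type} {G : Dgraph V} {H : Dgraph X}

theorem vwalk_alt_in (hGll : G.Loopless) {v : V} (hIN : TypeIN G v) :
    ∀ {σs : List (V → X)} {Sv : List X}, VWalk G v σs Sv →
      (∀ σ ∈ σs, IsHom G H σ) → σs.Chain' UC → Alt H true Sv := by
  intro σs Sv hw
  induction hw with
  | single σ => intro _ _; simp
  | @stay σ σ' rest S hst hw ih =>
    intro hhom hch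
    exact ih (fun τ hτ => hhom τ (List.mem_cons_of_mem _ hτ)) hch.tail
  | @move σ σ' rest S h₀ hne hnb hw ih =>
    intro hhom hch
    obtain ⟨u, hu⟩ := hIN
    have hune : u ≠ v := fun h => hGll v (h ▸ hu)
    have huv : G.UAdj v u := Or.inr hu
    have hσu : σ u = h₀ := hnb u huv
    have h1 : H.Adj h₀ (σ v) := by rw [← hσu]; exact hhom σ (by simp) hu
    have hch1 : UC σ σ' := (List.isChain_cons_cons.1 hch).1
    have hσ'u : σ' u = h₀ := (uc_stay hch1 hne hune).symm.trans hσu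
    have h2 : H.Adj h₀ (σ' v) := by
      rw [← hσ'u]; exact hhom σ' (by simp) hu
    have hS : S = σ' v :: S.tail := eq_cons_head (by rw [hw.head_eq]; rfl)
    have ihS : Alt H true S :=
      ih (fun τ hτ => hhom τ (List.mem_cons_of_mem _ hτ)) hch.tail
    refine ⟨by simpa using h1, ?_⟩
    rw [hS]
    refine ⟨by simpa using h2, ?_⟩
    rw [← hS]
    simpa using ihS

theorem vwalk_alt_out (hGll : G.Loopless) {v : V} (hOUT : TypeOUT G v) :
    ∀ {σs : List (V → X)} {Sv : List X}, VWalk G v σs Sv →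
      (∀ σ ∈ σs, IsHom G H σ) → σs.Chain' UC → Alt H false Sv := by
  intro σs Sv hw
  induction hw with
  | single σ => intro _ _; simp
  | @stay σ σ' rest S hst hw ih =>
    intro hhom hch
    exact ih (fun τ hτ => hhom τ (List.mem_cons_of_mem _ hτ)) hch.tail
  | @move σ σ' rest S h₀ hne hnb hw ih =>
    intro hhom hch
    obtain ⟨u, hu⟩ := hOUT
    have hune : u ≠ v := fun h => hGll v (h ▸ hu)
    have huv : G.UAdj v u := Or.inl hu
    have hσu : σ u = h₀ := hnb u huv
    have h1 : H.Adj (σ v) h₀ := by rw [← hσu]; exact hhom σ (by simp) hu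
    have hch1 : UC σ σ' := (List.isChain_cons_cons.1 hch).1
    have hσ'u : σ' u = h₀ := (uc_stay hch1 hne hune).symm.trans hσu
    have h2 : H.Adj (σ' v) h₀ := by
      rw [← hσ'u]; exact hhom σ' (by simp) hu
    have hS : S = σ' v :: S.tail := eq_cons_head (by rw [hw.head_eq]; rfl)
    have ihS : Alt H false S :=
      ih (fun τ hτ => hhom τ (List.mem_cons_of_mem _ hτ)) hch.tail
    refine ⟨by simpa using h1, ?_⟩
    rw [hS]
    refine ⟨by simpa using h2, ?_⟩
    rw [← hS]
    simpa using ihS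

theorem conj_congr (a b : V → X) {Wl : List V} {q : V} (hhd : Wl.head? = some q)
    {M M' : List X} (hM : M.head? = some (a q)) (hM' : M'.head? = some (a q))
    (h : PiEq M M') : PiEq (conj a b Wl M) (conj a b Wl M') := by
  cases Wl with
  | nil => simp at hhd
  | cons q0 W =>
    have hq0 : q0 = q := by simpa using hhd
    rw [← hq0] at hM hM'
    have key : ∀ (N : List X), N.head? = some (a q0) →
        conj a b (q0 :: W) N = (List.map a W).reverse ++ N ++ (List.map b (q0 :: W)).tail := by
      intro N hN
      simp only [conj, wcomp, List.map_cons, List.reverse_cons]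
      rw [eq_cons_head hN]
      simp [List.append_assoc]
    rw [key M hM, key M' hM']
    exact PiEq.infix _ _ h

theorem vwalk_moves_in {v : V} (hnb : ∃ w, G.UAdj v w) :
    ∀ {σs : List (V → X)} {Sv : List X}, VWalk G v σs Sv → Alt H true Sv →
      σs.Chain' (fun σ σ' => σ v ≠ σ' v → ∀ h₁, (∀ w, G.UAdj v w → σ w = h₁) →
        H.Adj h₁ (σ v) ∧ H.Adj h₁ (σ' v)) := by
  intro σs Sv hw
  induction hw with
  | single σ => intro _; exact List.isChain_singleton _
  | @stay σ σ' rest S hst hw ih =>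
    intro halt
    exact List.isChain_cons_cons.2 ⟨fun hne => absurd hst hne, ih halt⟩
  | @move σ σ' rest S h₀ hne hnb0 hw ih =>
    intro halt
    obtain ⟨w₀, hw₀⟩ := hnb
    have hS : S = σ' v :: S.tail := eq_cons_head (by rw [hw.head_eq]; rfl)
    have h1 : H.Adj h₀ (σ v) := by simpa using halt.1
    have halt2 : Alt H false (h₀ :: S) := halt.2
    rw [hS] at halt2
    have h2 : H.Adj h₀ (σ' v) := by simpa using halt2.1
    have halt3 : Alt H true S := by
      rw [hS]; simpa using halt2.2
    refine List.isChain_cons_cons.2 ⟨?_, ih halt3⟩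
    intro _ h₁ hh₁
    have hh : h₁ = h₀ := by rw [← hh₁ w₀ hw₀, hnb0 w₀ hw₀]
    rw [hh]
    exact ⟨h1, h2⟩

theorem vwalk_moves_out {v : V} (hnb : ∃ w, G.UAdj v w) :
    ∀ {σs : List (V → X)} {Sv : List X}, VWalk G v σs Sv → Alt H false Sv →
      σs.Chain' (fun σ σ' => σ v ≠ σ' v → ∀ h₁, (∀ w, G.UAdj v w → σ w = h₁) →
        H.Adj (σ v) h₁ ∧ H.Adj (σ' v) h₁) := by
  intro σs Sv hw
  induction hw with
  | single σ => intro _; exact List.isChain_singleton _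
  | @stay σ σ' rest S hst hw ih =>
    intro halt
    exact List.isChain_cons_cons.2 ⟨fun hne => absurd hst hne, ih halt⟩
  | @move σ σ' rest S h₀ hne hnb0 hw ih =>
    intro halt
    obtain ⟨w₀, hw₀⟩ := hnb
    have hS : S = σ' v :: S.tail := eq_cons_head (by rw [hw.head_eq]; rfl)
    have h1 : H.Adj (σ v) h₀ := by simpa using halt.1
    have halt2 : Alt H true (h₀ :: S) := halt.2
    rw [hS] at halt2
    have h2 : H.Adj (σ' v) h₀ := by simpa using halt2.1
    have halt3 : Alt H false S := by
      rw [hS]; simpa using halt2.2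
    refine List.isChain_cons_cons.2 ⟨?_, ih halt3⟩
    intro _ h₁ hh₁
    have hh : h₁ = h₀ := by rw [← hh₁ w₀ hw₀, hnb0 w₀ hw₀]
    rw [hh]
    exact ⟨h1, h2⟩

theorem forward_main (hGll : G.Loopless) (hHll : H.Loopless)
    (hnbr : ∀ w : V, ∃ w', G.UAdj w w')
    {α β : V → X} {q : V} {Q : List X}
    (hQhead : Q.head? = some (α q))
    (hM : MRealizable G H α β q Q) : OrientCompatible G H α β q Q := by
  obtain ⟨σs, Sq, ⟨hne, hhom, hch⟩, hhead, hlast, hmono, hSq, hpi⟩ := hM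
  intro v Wl hWl S hSred hSpi
  obtain ⟨Sv, hSv⟩ := vwalk_exists v σs hne hmono
  have hconj := vwalk_conj hGll q hch hmono hhead hlast hSq hnbr Wl v hWl Sv hSv
  have hqhd : Wl.head? = some q := hWl.2.1
  have hSqhd : Sq.head? = some (α q) := by rw [hSq.head_eq, hhead]; rfl
  have hcongr : PiEq (conj α β Wl Sq) (conj α β Wl Q) :=
    conj_congr α β hqhd hSqhd hQhead hpi
  have hSvS : PiEq Sv S := (hconj.trans hcongr).trans hSpi
  have hrtg := rtg_of_pieq_reduced hSvS hSred
  constructor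
  · intro hIN
    have halt := vwalk_alt_in (H := H) hGll hIN hSv hhom hch
    exact (compat_iff S).1.2 (alt_rtg hHll hrtg true halt)
  · intro hOUT
    have halt := vwalk_alt_out (H := H) hGll hOUT hSv hhom hch
    exact (compat_iff S).2.2 (alt_rtg hHll hrtg false halt)

end Fwd
/-! ### usym conversions, cancelling pairs, collapse lemmas -/

section Surg
variable {V X : Type} {G : Dgraph V} {H : Dgraph X}

theorem uadj_usym (G : Dgraph V) (u v : V) : G.usym.UAdj u v ↔ G.UAdj u v := by
  constructor
  · rintro (h | h)
    · exact h
    · exact h.symm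
  · intro h; exact Or.inl h

theorem mono_usym (σs : List (V → X)) : MonoNbhd G.usym σs ↔ MonoNbhd G σs := by
  unfold MonoNbhd
  constructor <;> intro h <;> refine h.imp ?_ <;> intro σ σ' hσ v hv <;>
    obtain ⟨h₀, hh₀⟩ := hσ v hv
  · exact ⟨h₀, fun w hw => hh₀ w ((uadj_usym G v w).2 hw)⟩
  · exact ⟨h₀, fun w hw => hh₀ w ((uadj_usym G v w).1 hw)⟩

theorem vwalk_usym {v : V} {σs : List (V → X)} {S : List X} :
    VWalk G.usym v σs S ↔ VWalk G v σs S := by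
  constructor <;> intro h
  · induction h with
    | single σ => exact VWalk.single σ
    | stay hst _ ih => exact VWalk.stay hst ih
    | move h₀ hne hnb _ ih =>
      exact VWalk.move h₀ hne (fun w hw => hnb w ((uadj_usym G v w).2 hw)) ih
  · induction h with
    | single σ => exact VWalk.single σ
    | stay hst _ ih => exact VWalk.stay hst ih
    | move h₀ hne hnb _ ih =>
      exact VWalk.move h₀ hne (fun w hw => hnb w ((uadj_usym G v w).1 hw)) ih

theorem list_eq_cons_head {α : Type _} {l : List α} {a : α} (h : l.head? = some a) :
    l = a :: l.tail := by
  cases l with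
  | nil => simp at h
  | cons b t => simp at h; rw [h]; rfl

theorem list_eq_dropLast {α : Type _} {l : List α} {a : α} (h : l.getLast? = some a) :
    l = l.dropLast ++ [a] := by
  have hne : l ≠ [] := by rintro rfl; simp at h
  have h2 := List.getLast?_eq_getLast_of_ne_nil hne
  rw [h] at h2
  have h3 : a = l.getLast hne := by simpa using h2
  rw [h3]
  exact (List.dropLast_append_getLast hne).symm

theorem mem_of_getLast?' {α : Type _} {l : List α} {a : α} (h : l.getLast? = some a) :
    a ∈ l := by
  rw [list_eq_dropLast h]; simp

theorem chain_pair {α : Type _} {R : α → α → Prop} {L P S : List α} {x x' : α}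
    (hL : L = P ++ x :: x' :: S) (h : L.Chain' R) : R x x' := by
  subst hL
  exact (List.isChain_cons_cons.1 (List.isChain_append.1 h).2.1).1

/-- Decompose a chain over `A ++ σ :: (D ++ ρ' :: C)`. -/
theorem chain_parts {α : Type _} {R : α → α → Prop} {A D C : List α} {σ ρ' : α} {τ μ : α}
    (hτ : D.head? = some τ) (hμ : D.getLast? = some μ)
    (h : (A ++ σ :: (D ++ ρ' :: C)).Chain' R) :
    R σ τ ∧ D.Chain' R ∧ R μ ρ' ∧ (ρ' :: C).Chain' R := by
  have hD : D = τ :: D.tail := list_eq_cons_head hτ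
  have h1 : (σ :: (D ++ ρ' :: C)).Chain' R := (List.isChain_append.1 h).2.1
  have h2 : ((σ :: D) ++ ρ' :: C).Chain' R := by simpa using h1
  obtain ⟨h3, h4, h5⟩ := List.isChain_append.1 h2
  refine ⟨?_, ?_, ?_, h4⟩
  · rw [hD] at h3
    exact (List.isChain_cons_cons.1 h3).1
  · exact h3.tail
  · refine h5 μ ?_ ρ' (by simp)
    rw [hD, List.getLast?_cons_cons, ← hD, hμ]
    exact rfl

/-- A cancelling pair for vertex `v`. -/
def SCP (G : Dgraph V) (v : V) (σs : List (V → X)) : Prop :=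
  ∃ (A D C : List (V → X)) (σ ρ' τ μ : V → X) (h₀ : X),
    σs = A ++ σ :: (D ++ ρ' :: C) ∧
    D.head? = some τ ∧ D.getLast? = some μ ∧
    σ v ≠ τ v ∧ (∀ ρ ∈ D, ρ v = τ v) ∧ μ v ≠ ρ' v ∧
    (∀ w, G.UAdj v w → σ w = h₀) ∧ (∀ w, G.UAdj v w → μ w = h₀)

theorem SCP.cons {v : V} {σs : List (V → X)} (ρ : V → X) (h : SCP G v σs) :
    SCP G v (ρ :: σs) := by
  obtain ⟨A, D, C, σ, ρ', τ, μ, h₀, hEq, hr⟩ := h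
  exact ⟨ρ :: A, D, C, σ, ρ', τ, μ, h₀, by rw [hEq]; rfl, hr⟩

theorem vwalk_firstmove {v : V} :
    ∀ {L : List (V → X)} {S : List X}, VWalk G v L S →
      ∀ {b h₂ : X} {S2 : List X}, S = b :: h₂ :: S2 →
      ∃ (E : List (V → X)) (μ ρ' : V → X) (C : List (V → X)),
        L = E ++ μ :: ρ' :: C ∧ (∀ τ ∈ E ++ [μ], τ v = b) ∧ μ v ≠ ρ' v ∧
        (∀ w, G.UAdj v w → μ w = h₂) ∧ VWalk G v (ρ' :: C) S2 := by
  intro L S hw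
  induction hw with
  | single σ => intro b h₂ S2 hS; simp at hS
  | @stay σ σ' rest S hst hw ih =>
    intro b h₂ S2 hS
    obtain ⟨E, μ, ρ', C, hL, hcol, hmv, hnb, hwS⟩ := ih hS
    have hσ'b : σ' v = b := by
      refine hcol σ' ?_
      cases E with
      | nil =>
        rw [List.nil_append, List.cons_eq_cons] at hL
        simp [hL.1]
      | cons e E' =>
        rw [List.cons_append, List.cons_eq_cons] at hL
        simp [hL.1]
    refine ⟨σ :: E, μ, ρ', C, by rw [List.cons_append, ← hL], ?_, hmv, hnb, hwS⟩
    intro π hπ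
    rcases (by simpa using hπ : π = σ ∨ π ∈ E ∨ π = μ) with rfl | hπ' | rfl
    · rw [hst, hσ'b]
    · exact hcol π (by simp [hπ'])
    · exact hcol π (by simp)
  | @move σ σ' rest S h₀ hne hnb0 hw ih =>
    intro b h₂ S2 hS
    rw [List.cons_eq_cons] at hS
    obtain ⟨hb, hS'⟩ := hS
    rw [List.cons_eq_cons] at hS'
    obtain ⟨hh, hS2⟩ := hS'
    refine ⟨[], σ, σ', rest, rfl, ?_, hne, fun w hw' => (hnb0 w hw').trans hh, hS2 ▸ hw⟩
    intro τ hτ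
    simp at hτ
    rw [hτ, ← hb]

theorem scp_of_not_red (hGll : G.Loopless) (hHll : H.Loopless)
    {v w₀ : V} (hw₀ : G.UAdj v w₀) :
    ∀ {σs : List (V → X)} {Sv : List X}, VWalk G v σs Sv →
      (∀ σ ∈ σs, IsHom G.usym H.usym σ) → σs.Chain' UC → ¬ Red Sv → SCP G v σs := by
  have hw₀v : w₀ ≠ v := by
    rintro rfl
    rcases hw₀ with h | h <;> exact hGll _ h
  have hcol_ne : ∀ (ρ : V → X), IsHom G.usym H.usym ρ → ρ v ≠ ρ w₀ := by
    intro ρ hρ hc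
    have := hρ (show G.usym.Adj v w₀ from hw₀)
    rw [hc] at this
    rcases this with h' | h' <;> exact hHll _ h'
  intro σs Sv hw
  induction hw with
  | single σ => intro _ _ hR; exact absurd (red_single _) hR
  | @stay σ σ' rest S hst hw ih =>
    intro hhom hch hR
    exact (ih (fun τ hτ => hhom τ (List.mem_cons_of_mem _ hτ)) hch.tail hR).cons σ
  | @move σ σ' rest S h₀ hne hnb0 hw ih =>
    intro hhom hch hR
    have hS : S = σ' v :: S.tail := eq_cons_head (by rw [hw.head_eq]; rfl)
    have hah : σ v ≠ h₀ := by
      rw [← hnb0 w₀ hw₀]; exact hcol_ne σ (hhom σ (by simp))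
    have hch1 : UC σ σ' := (List.isChain_cons_cons.1 hch).1
    have hσ'w₀ : σ' w₀ = h₀ := (uc_stay hch1 hne hw₀v).symm.trans (hnb0 w₀ hw₀)
    have hbh : σ' v ≠ h₀ := by
      rw [← hσ'w₀]; exact hcol_ne σ' (hhom σ' (by simp))
    by_cases hRS : Red S
    · -- the junction must be the redex
      have hred1 : ¬ Red (h₀ :: S) := by
        intro hr
        refine hR ((red_cons_iff _ _ _).2 ⟨hah, ?_, hr⟩)
        intro z hz
        rw [hS] at hz
        simp at hz
        rw [← hz]
        exact hne
      rw [hS] at hred1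
      have hz : ∃ z ∈ S.tail.head?, h₀ = z := by
        by_contra hcon
        push_neg at hcon
        refine hred1 ((red_cons_iff _ _ _).2 ⟨fun hc => hbh hc.symm, ?_, by rw [← hS]; exact hRS⟩)
        intro z hz
        exact hcon z hz
      obtain ⟨z, hz1, hz2⟩ := hz
      rw [← hz2] at hz1
      have htail : S.tail = h₀ :: S.tail.tail := list_eq_cons_head hz1
      have hS2 : S = σ' v :: h₀ :: S.tail.tail := by
        conv_lhs => rw [hS, htail]
      obtain ⟨E, μ, ρ', C, hL, hcol, hmv, hnbμ, _⟩ := vwalk_firstmove hw hS2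
      rcases hED : E ++ [μ] with _ | ⟨τ, Dt⟩
      · exact absurd hED (by simp)
      · refine ⟨[], E ++ [μ], C, σ, ρ', τ, μ, h₀, ?_, by rw [hED]; rfl, by simp, ?_, ?_, ?_, hnb0, hnbμ⟩
        · rw [List.nil_append, hL]
          simp
        · have : τ v = σ' v := by
            refine hcol τ ?_
            rw [hED]; simp
          rw [this]; exact hne
        · intro ρ hρ
          rw [hcol ρ hρ, hcol τ (by rw [hED]; simp)]
        · exact hmv
    · exact (ih (fun τ hτ => hhom τ (List.mem_cons_of_mem _ hτ)) hch.tail hRS).cons σ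

theorem first_change {w : V} {h' : X} :
    ∀ (D : List (V → X)), (∀ τ ∈ D.head?, τ w = h') →
      (∀ ρ ∈ D, ρ w = h') ∨
      ∃ E₁ x x' E₂, D = E₁ ++ x :: x' :: E₂ ∧ (∀ ρ ∈ E₁ ++ [x], ρ w = h') ∧ x' w ≠ h' := by
  intro D
  induction D with
  | nil => intro _; left; simp
  | cons τ D' ih =>
    intro hhd
    have hτ : τ w = h' := hhd τ rfl
    cases D' with
    | nil =>
      left
      intro ρ hρ
      simp at hρ
      rw [hρ]; exact hτ
    | cons τ' D'' =>
      by_cases hτ' : τ' w = h'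
      · rcases ih (by intro z hz; simp at hz; rw [← hz]; exact hτ') with hall | ⟨E₁, x, x', E₂, hD, hpre, hx'⟩
        · left
          intro ρ hρ
          rcases List.mem_cons.1 hρ with rfl | hρ'
          · exact hτ
          · exact hall ρ hρ'
        · right
          refine ⟨τ :: E₁, x, x', E₂, by rw [List.cons_append, ← hD], ?_, hx'⟩
          intro ρ hρ
          rcases (by simpa using hρ : ρ = τ ∨ ρ ∈ E₁ ∨ ρ = x) with rfl | hρ' | rfl
          · exact hτ
          · exact hpre ρ (by simp [hρ'])
          · exact hpre ρ (by simp)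
      · right
        refine ⟨[], τ, τ', D'', rfl, ?_, hτ'⟩
        intro ρ hρ
        simp at hρ
        rw [hρ]; exact hτ

theorem vwalk_collapse_const {v : V} {b : X} :
    ∀ {D : List (V → X)} {μ : V → X} {C' : List (V → X)} {S : List X},
      D.getLast? = some μ → (∀ ρ ∈ D, ρ v = b) →
      (VWalk G v (D ++ C') S ↔ VWalk G v (μ :: C') S) := by
  intro D
  induction D with
  | nil => intro μ C' S h; simp at h
  | cons ρ D' ih =>
    intro μ C' S hμ hconst
    cases D' with
    | nil =>
      have hμρ : μ = ρ := by have := hμ; simp at this; exact this.symm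
      rw [hμρ]
      exact Iff.rfl
    | cons ρ₂ D'' =>
      have h1 : ρ v = b := hconst ρ (by simp)
      have h2 : ρ₂ v = b := hconst ρ₂ (by simp)
      have hst : ρ v = ρ₂ v := by rw [h1, h2]
      rw [List.getLast?_cons_cons] at hμ
      have hsub : ∀ ρ' ∈ ρ₂ :: D'', ρ' v = b := fun ρ' hρ' =>
        hconst ρ' (List.mem_cons_of_mem _ hρ')
      constructor
      · intro h
        exact (ih hμ hsub).1 ((vwalk_stay_collapse hst).1 h)
      · intro h
        exact (vwalk_stay_collapse hst).2 ((ih hμ hsub).2 h)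

theorem vwalk_dup {v : V} (P : List (V → X)) (ρ : V → X) (C : List (V → X)) (S : List X) :
    VWalk G v (P ++ ρ :: ρ :: C) S ↔ VWalk G v (P ++ ρ :: C) S := by
  constructor
  · intro h
    obtain ⟨S₁, S₂, h1, h2, rfl⟩ := vwalk_glue_mp h P ρ (ρ :: C) rfl
    exact vwalk_glue_mpr P h1 ((vwalk_stay_collapse rfl).1 h2)
  · intro h
    obtain ⟨S₁, S₂, h1, h2, rfl⟩ := vwalk_glue_mp h P ρ C rfl
    exact vwalk_glue_mpr P h1 (VWalk.stay rfl h2)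

end Surg
/-! ### Minimality gives neighbor-freeness -/

section MinGap
variable {V X : Type} {G : Dgraph V} {H : Dgraph X}

theorem scp_min_nbhd (hGll : G.Loopless)
    {σs : List (V → X)} (hch : σs.Chain' UC) (hmono : MonoNbhd G σs)
    {v : V} {A D C : List (V → X)} {σ ρ' τ μ : V → X} {h₀ : X}
    (hEq : σs = A ++ σ :: (D ++ ρ' :: C))
    (hτ : D.head? = some τ) (hμ : D.getLast? = some μ)
    (hmv1 : σ v ≠ τ v) (hconst : ∀ ρ ∈ D, ρ v = τ v) (hmv2 : μ v ≠ ρ' v)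
    (hnb1 : ∀ w, G.UAdj v w → σ w = h₀) (hnb2 : ∀ w, G.UAdj v w → μ w = h₀)
    (hmin : ∀ (v' : V) (A' D' C' : List (V → X)) (σ₁ ρ₁ τ₁ μ₁ : V → X) (h₁ : X),
      σs = A' ++ σ₁ :: (D' ++ ρ₁ :: C') →
      D'.head? = some τ₁ → D'.getLast? = some μ₁ →
      σ₁ v' ≠ τ₁ v' → (∀ ρ ∈ D', ρ v' = τ₁ v') → μ₁ v' ≠ ρ₁ v' →
      (∀ w, G.UAdj v' w → σ₁ w = h₁) → (∀ w, G.UAdj v' w → μ₁ w = h₁) →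
      D.length ≤ D'.length) :
    ∀ w, G.UAdj v w → ∀ ρ ∈ D, ρ w = h₀ := by
  intro w hw
  have hmono' : σs.Chain'
      (fun σ σ' => ∀ u, σ u ≠ σ' u → ∃ h, ∀ z, G.UAdj u z → σ z = h) := hmono
  have hwv : w ≠ v := by
    rintro rfl
    rcases hw with h | h <;> exact hGll _ h
  have hUCστ : UC σ τ := (chain_parts hτ hμ (hEq ▸ hch)).1
  have hτw : τ w = h₀ := by
    rw [← uc_stay hUCστ hmv1 hwv]
    exact hnb1 w hw
  rcases first_change (w := w) (h' := h₀) D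
      (by intro z hz; rw [hτ] at hz; simp at hz; rw [← hz]; exact hτw) with hall |
      ⟨E₁, x, x', E₂, hD, hpre, hx'⟩
  · exact hall
  exfalso
  have hμ2 : (x' :: E₂).getLast? = some μ := by
    have h1 := hμ
    rw [hD] at h1
    rw [show E₁ ++ x :: x' :: E₂ = (E₁ ++ [x]) ++ x' :: E₂ by simp] at h1
    cases E₂ with
    | nil => simpa using h1
    | cons e E₂' =>
      rw [List.getLast?_append_of_ne_nil _ (by simp)] at h1
      exact h1
  have hμw : μ w = h₀ := hnb2 w hw
  rcases first_change (w := w) (h' := x' w) (x' :: E₂)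
      (by intro z hz; simp at hz; rw [hz]) with hall2 | ⟨F₁, y, y', F₂, hD2, hpre2, hy'⟩
  · exact hx' (((hall2 μ (mem_of_getLast?' hμ2)).symm.trans hμw).symm).symm
  -- memberships
  have hxD : x ∈ D := by rw [hD]; simp
  have hyD : y ∈ D := by
    rw [hD]
    have : y ∈ x' :: E₂ := by rw [hD2]; simp
    rcases List.mem_cons.1 this with h1 | h1
    · rw [h1]; simp
    · simp [h1]
  -- mono at the two steps
  have hEq1 : σs = (A ++ σ :: E₁) ++ x :: x' :: (E₂ ++ ρ' :: C) := by
    rw [hEq, hD]; simp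
  have hEq2 : σs = (A ++ σ :: (E₁ ++ x :: F₁)) ++ y :: y' :: (F₂ ++ ρ' :: C) := by
    rw [hEq, hD]
    rw [show (E₁ ++ x :: x' :: E₂ : List (V → X)) ++ ρ' :: C
        = E₁ ++ x :: ((x' :: E₂) ++ ρ' :: C) by simp]
    rw [hD2]
    simp
  have hxw : x w = h₀ := hpre x (by simp)
  have hyw : y w = x' w := hpre2 y (by simp)
  obtain ⟨h₁, hh₁⟩ := (chain_pair hEq1 hmono') w (by rw [hxw]; exact fun hc => hx' hc.symm)
  obtain ⟨h₂, hh₂⟩ := (chain_pair hEq2 hmono') w (by rw [hyw]; exact fun hc => hy' hc.symm)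
  have hb1 : h₁ = τ v := by rw [← hh₁ v hw.symm', hconst x hxD]
  have hb2 : h₂ = τ v := by rw [← hh₂ v hw.symm', hconst y hyD]
  -- SCP data for w
  have hEqSCP : σs = (A ++ σ :: E₁) ++ x :: ((F₁ ++ [y]) ++ y' :: (F₂ ++ ρ' :: C)) := by
    rw [hEq, hD]
    rw [show (E₁ ++ x :: x' :: E₂ : List (V → X)) ++ ρ' :: C
        = E₁ ++ x :: ((x' :: E₂) ++ ρ' :: C) by simp]
    rw [hD2]
    simp
  have hD'hd : (F₁ ++ [y]).head? = some x' := by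
    cases F₁ with
    | nil =>
      have : x' = y := (List.cons_eq_cons.1 (by simpa using hD2)).1
      simp [this]
    | cons f F₁' =>
      have : x' = f := (List.cons_eq_cons.1 (by simpa using hD2)).1
      simp [this]
  have hD'last : (F₁ ++ [y]).getLast? = some y := by simp
  have hlen := hmin w (A ++ σ :: E₁) (F₁ ++ [y]) (F₂ ++ ρ' :: C) x y' x' y (τ v)
    hEqSCP hD'hd hD'last
    (by rw [hxw]; exact fun hc => hx' hc.symm)
    (by
      intro ρ hρ
      rcases (by simpa using hρ : ρ ∈ F₁ ∨ ρ = y) with h1 | rfl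
      · exact hpre2 ρ (by simp [h1])
      · exact hyw)
    (by rw [hyw]; exact fun hc => hy' hc.symm)
    (fun z hz => by rw [hh₁ z hz, hb1])
    (fun z hz => by rw [hh₂ z hz, hb2])
  have hl1 : D.length = E₁.length + 2 + E₂.length := by rw [hD]; simp; omega
  have hl2 : E₂.length + 1 = F₁.length + 2 + F₂.length := by
    have := congrArg List.length hD2
    simp at this
    omega
  have hl3 : (F₁ ++ [y]).length = F₁.length + 1 := by simp
  omega

end MinGap
/-! ### The surgery step -/

section Surgery2
variable {V X : Type} {G : Dgraph V} {H : Dgraph X}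

noncomputable local instance (priority := low) (Y : Type) : DecidableEq Y :=
  Classical.typeDecidableEq Y

theorem getLast?_cons_of_ne_nil {α : Type _} (a : α) {l : List α} (h : l ≠ []) :
    (a :: l).getLast? = l.getLast? := by
  cases l with
  | nil => exact absurd rfl h
  | cons b t => exact List.getLast?_cons_cons

theorem head?_append_cons {α : Type _} (A : List α) (x : α) (Z Z' : List α) :
    (A ++ x :: Z).head? = (A ++ x :: Z').head? := by
  cases A <;> rfl

theorem chain'_update_UC {v : V} {a : X} :
    ∀ {D : List (V → X)}, D.Chain' UC → (∀ ρ ∈ D, ρ v = (D.head?.getD (fun _ => a)) v) →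
      ∀ (b : X), (∀ ρ ∈ D, ρ v = b) →
      (D.map (fun ρ => Function.update ρ v a)).Chain' UC := by
  intro D
  induction D with
  | nil => intro _ _ b _; exact List.isChain_nil
  | cons ρ₁ D' ih =>
    intro hc _ b hcol
    cases D' with
    | nil => exact List.isChain_singleton _
    | cons ρ₂ D'' =>
      refine List.isChain_cons_cons.2 ⟨?_, ih (List.isChain_cons_cons.1 hc).2 (by
        intro ρ hρ
        rw [hcol ρ (List.mem_cons_of_mem _ hρ)]
        simp [hcol ρ₂ (by simp)]) b (fun ρ hρ => hcol ρ (List.mem_cons_of_mem _ hρ))⟩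
      obtain ⟨u₀, hu₀, huniq⟩ := (List.isChain_cons_cons.1 hc).1
      have hu₀v : u₀ ≠ v := by
        rintro rfl
        rw [hcol ρ₁ (by simp), hcol ρ₂ (by simp)] at hu₀
        exact hu₀ rfl
      refine ⟨u₀, ?_, ?_⟩
      · simpa only [Function.update_of_ne hu₀v] using hu₀
      · intro u' hu'
        by_cases hu'v : u' = v
        · subst hu'v
          simp only [Function.update_self] at hu'
          exact absurd rfl hu'
        · simp only [Function.update_of_ne hu'v] at hu'
          exact huniq u' hu'

theorem chain'_update_mono {v : V} {a h₀ : X} :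
    ∀ {D : List (V → X)},
      D.Chain' (fun σ σ' => ∀ u, σ u ≠ σ' u → ∃ h, ∀ z, G.UAdj u z → σ z = h) →
      ∀ (b : X), (∀ ρ ∈ D, ρ v = b) → (∀ ρ ∈ D, ∀ w, G.UAdj v w → ρ w = h₀) →
      (D.map (fun ρ => Function.update ρ v a)).Chain'
        (fun σ σ' => ∀ u, σ u ≠ σ' u → ∃ h, ∀ z, G.UAdj u z → σ z = h) := by
  intro D
  induction D with
  | nil => intro _ b _ _; exact List.isChain_nil
  | cons ρ₁ D' ih =>
    intro hc b hcol hnb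
    cases D' with
    | nil => exact List.isChain_singleton _
    | cons ρ₂ D'' =>
      refine List.isChain_cons_cons.2 ⟨?_, ih (List.isChain_cons_cons.1 hc).2 b
        (fun ρ hρ => hcol ρ (List.mem_cons_of_mem _ hρ))
        (fun ρ hρ => hnb ρ (List.mem_cons_of_mem _ hρ))⟩
      intro u hu
      have huv : u ≠ v := by
        rintro rfl
        simp only [Function.update_self] at hu
        exact hu rfl
      simp only [Function.update_of_ne huv] at hu
      have hnu : ¬ G.UAdj v u := by
        intro hadj
        rw [hnb ρ₁ (by simp) u hadj, hnb ρ₂ (by simp) u hadj] at hu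
        exact hu rfl
      obtain ⟨h, hh⟩ := (List.isChain_cons_cons.1 hc).1 u hu
      refine ⟨h, fun z hz => ?_⟩
      have hzv : z ≠ v := by
        rintro rfl
        exact hnu hz.symm'
      simp only [Function.update_of_ne hzv]
      exact hh z hz

theorem hom_update {v : V} {h₀ : X} (hGll : G.Loopless)
    {σ ρ : V → X} (hσ : IsHom G.usym H.usym σ) (hρ : IsHom G.usym H.usym ρ)
    (hσnb : ∀ w, G.UAdj v w → σ w = h₀) (hρnb : ∀ w, G.UAdj v w → ρ w = h₀) :
    IsHom G.usym H.usym (Function.update ρ v (σ v)) := by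
  intro x y hxy
  have hxy' : G.UAdj x y := hxy
  rcases eq_or_ne x v with rfl | hxv
  · have hyv : y ≠ x := by
      rintro rfl
      rcases hxy' with h | h <;> exact hGll _ h
    rw [Function.update_self, Function.update_of_ne hyv, hρnb y hxy']
    have := hσ (show G.usym.Adj x y from hxy)
    rwa [hσnb y hxy'] at this
  · rcases eq_or_ne y v with rfl | hyv
    · rw [Function.update_self, Function.update_of_ne hxv,
        hρnb x (hxy'.symm' : G.UAdj y x)]
      have := hσ (show G.usym.Adj x y from hxy)
      rwa [hσnb x (hxy'.symm' : G.UAdj y x)] at this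
    · rw [Function.update_of_ne hxv, Function.update_of_ne hyv]
      exact hρ hxy

theorem forall₂_append' {α β : Type _} {R : α → β → Prop}
    {l₁ l₁' : List α} {l₂ l₂' : List β} (h : List.Forall₂ R l₁ l₂)
    (h' : List.Forall₂ R l₁' l₂') : List.Forall₂ R (l₁ ++ l₁') (l₂ ++ l₂') := by
  induction h with
  | nil => exact h'
  | cons hx _ ih => exact List.Forall₂.cons hx ih

theorem forall₂_refl' {α : Type _} {R : α → α → Prop} :
    ∀ {l : List α}, (∀ x ∈ l, R x x) → List.Forall₂ R l l := by
  intro l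
  induction l with
  | nil => intro _; constructor
  | cons x t ih =>
    intro h
    exact List.Forall₂.cons (h x (by simp)) (ih fun y hy => h y (by simp [hy]))

theorem forall₂_map_self {α : Type _} {R : α → α → Prop} (f : α → α) :
    ∀ {l : List α}, (∀ x ∈ l, R x (f x)) → List.Forall₂ R l (l.map f) := by
  intro l
  induction l with
  | nil => intro _; constructor
  | cons x t ih =>
    intro h
    exact List.Forall₂.cons (h x (by simp)) (ih fun y hy => h y (by simp [hy]))

theorem surgery (hGll : G.Loopless) (hHll : H.Loopless)
    {σs : List (V → X)} {α β : V → X} {q : V}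
    (hhom : ∀ σ ∈ σs, IsHom G.usym H.usym σ)
    (hch : σs.Chain' UC) (hmono : MonoNbhd G σs)
    (hhead : σs.head? = some α) (hlast : σs.getLast? = some β)
    {Sq : List X} (hSq : VWalk G q σs Sq)
    {v : V} (hvnb : ∃ w, G.UAdj v w)
    {A D C : List (V → X)} {σ ρ' τ μ : V → X} {h₀ : X}
    (hEq : σs = A ++ σ :: (D ++ ρ' :: C))
    (hτ : D.head? = some τ) (hμ : D.getLast? = some μ)
    (hmv1 : σ v ≠ τ v) (hconst : ∀ ρ ∈ D, ρ v = τ v) (hmv2 : μ v ≠ ρ' v)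
    (hnb1 : ∀ w, G.UAdj v w → σ w = h₀) (hnb2 : ∀ w, G.UAdj v w → μ w = h₀)
    (hDnb : ∀ w, G.UAdj v w → ∀ ρ ∈ D, ρ w = h₀) :
    ∃ (σs' : List (V → X)) (Sq' : List X),
      σs'.length < σs.length ∧
      (∀ σ' ∈ σs', IsHom G.usym H.usym σ') ∧ σs'.Chain' UC ∧ MonoNbhd G σs' ∧
      σs'.head? = some α ∧ σs'.getLast? = some β ∧
      VWalk G q σs' Sq' ∧ PiEq Sq' Sq := by
  classical
  have hDne : D ≠ [] := by rintro rfl; simp at hτ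
  have hmono' : σs.Chain'
      (fun σ σ' => ∀ u, σ u ≠ σ' u → ∃ h, ∀ z, G.UAdj u z → σ z = h) := hmono
  obtain ⟨hUCστ, hUCD, hUCμρ, hUCρC⟩ := chain_parts hτ hμ (hEq ▸ hch)
  obtain ⟨hMστ, hMD, hMμρ, hMρC⟩ := chain_parts hτ hμ (hEq ▸ hmono')
  obtain ⟨hchA, hchRest, hjAσ⟩ := List.isChain_append.1 (hEq ▸ hch)
  obtain ⟨hmoA, hmoRest, hjmAσ⟩ := List.isChain_append.1 (hEq ▸ hmono')
  set a := σ v with ha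
  set b := τ v with hb
  set c := ρ' v with hc
  set upd : (V → X) → (V → X) := fun ρ => Function.update ρ v a with hupd
  set M := D.map upd with hM
  -- basic pointwise facts
  have hmemD : ∀ ρ ∈ D, ρ ∈ σs := by
    intro ρ hρ; rw [hEq]; simp [hρ]
  have hσmem : σ ∈ σs := by rw [hEq]; simp
  have hρ'mem : ρ' ∈ σs := by rw [hEq]; simp
  have hτupd : upd τ = σ := by
    funext u
    by_cases huv : u = v
    · subst huv; simp [hupd, ha]
    · rw [show upd τ u = τ u from Function.update_of_ne huv _ _]
      exact (uc_stay hUCστ hmv1 huv).symm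
  have hρ'upd : ∀ u, u ≠ v → μ u = ρ' u := fun u huv => uc_stay hUCμρ hmv2 huv
  have hMne : M ≠ [] := by simp [hM, hDne]
  have hMhd : M.head? = some σ := by
    rw [hM, list_eq_cons_head hτ]
    simp [hτupd]
  have hMlast : M.getLast? = some (upd μ) := by
    rw [hM]
    conv_lhs => rw [list_eq_dropLast hμ]
    simp
  have hMcol : ∀ ρ ∈ M, ρ v = a := by
    intro ρ hρ
    rw [hM] at hρ
    obtain ⟨ρ₀, _, rfl⟩ := List.mem_map.1 hρ
    simp [hupd]
  have hMnb : ∀ w, G.UAdj v w → ∀ ρ ∈ M, ρ w = h₀ := by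
    intro w hw ρ hρ
    have hwv : w ≠ v := by
      rintro rfl; rcases hw with h | h <;> exact hGll _ h
    rw [hM] at hρ
    obtain ⟨ρ₀, hρ₀, rfl⟩ := List.mem_map.1 hρ
    rw [show upd ρ₀ w = ρ₀ w from Function.update_of_ne hwv _ _]
    exact hDnb w hw ρ₀ hρ₀
  have hMhom : ∀ ρ ∈ M, IsHom G.usym H.usym ρ := by
    intro ρ hρ
    rw [hM] at hρ
    obtain ⟨ρ₀, hρ₀, rfl⟩ := List.mem_map.1 hρ
    exact hom_update hGll (hhom σ hσmem) (hhom ρ₀ (hmemD ρ₀ hρ₀)) hnb1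
      (fun w hw => hDnb w hw ρ₀ hρ₀)
  have hMchUC : M.Chain' UC :=
    chain'_update_UC hUCD (fun ρ hρ => by rw [hτ]; exact hconst ρ hρ) b hconst
  have hMchMono : M.Chain'
      (fun σ σ' => ∀ u, σ u ≠ σ' u → ∃ h, ∀ z, G.UAdj u z → σ z = h) :=
    chain'_update_mono hMD b hconst (fun ρ hρ w hw => hDnb w hw ρ hρ)
  obtain ⟨w₀, hw₀⟩ := hvnb
  -- endpoints
  have hlastC : (ρ' :: C).getLast? = some β := by
    rw [hEq, List.getLast?_append_of_ne_nil _ (by simp),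
      getLast?_cons_of_ne_nil _ (by simp),
      List.getLast?_append_of_ne_nil _ (by simp)] at hlast
    exact hlast
  have hDsplit : D ++ ρ' :: C = τ :: (D.tail ++ ρ' :: C) := by
    conv_lhs => rw [list_eq_cons_head hτ]
    exact rfl
  have hMsplit : ∀ (T : List (V → X)), M ++ T = σ :: (M.tail ++ T) := by
    intro T
    conv_lhs => rw [list_eq_cons_head hMhd]
    exact rfl
  -- glue the walk at σ
  obtain ⟨S₁, S₂, hS₁, hS₂, hSqEq⟩ := vwalk_glue_mp hSq A σ (D ++ ρ' :: C) hEq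
  -- membership helper for the new sequences
  have hmemnew : ∀ (T : List (V → X)), (∀ ρ₁ ∈ T, IsHom G.usym H.usym ρ₁) →
      ∀ ρ₁ ∈ A ++ (M ++ T), IsHom G.usym H.usym ρ₁ := by
    intro T hT ρ₁ hρ₁
    rcases (by simpa using hρ₁ : ρ₁ ∈ A ∨ ρ₁ ∈ M ∨ ρ₁ ∈ T) with h | h | h
    · exact hhom ρ₁ (by rw [hEq]; simp [h])
    · exact hMhom ρ₁ h
    · exact hT ρ₁ h
  have hMThd : ∀ (T : List (V → X)), (M ++ T).head? = some σ := by
    intro T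
    rw [hMsplit T]
    rfl
  have hheadnew' : ∀ (T : List (V → X)), (A ++ (M ++ T)).head? = some α := by
    intro T
    rw [hMsplit T, head?_append_cons A σ _ (D ++ ρ' :: C), ← hEq]
    exact hhead
  -- junction conditions at A
  have hjA : ∀ (T : List (V → X)) (R : (V → X) → (V → X) → Prop),
      (∀ x ∈ A.getLast?, ∀ y ∈ (σ :: (D ++ ρ' :: C)).head?, R x y) →
      ∀ x ∈ A.getLast?, ∀ y ∈ (M ++ T).head?, R x y := by
    intro T R hR x hx y hy
    rw [hMThd T] at hy
    simp at hy
    subst hy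
    exact hR x hx σ rfl
  by_cases hac : a = c
  · -- `a = c` : drop both moves of `v`
    have hμρeq : upd μ = ρ' := by
      funext u
      by_cases huv : u = v
      · subst huv; rw [show upd μ u = a from Function.update_self _ _ _, hac]
      · rw [show upd μ u = μ u from Function.update_of_ne huv _ _]
        exact hρ'upd u huv
    have hMdrop : M = M.dropLast ++ [ρ'] := by
      rw [← hμρeq]
      exact list_eq_dropLast hMlast
    have hWALK : ∃ Sq', VWalk G q (A ++ (M ++ C)) Sq' ∧ PiEq Sq' Sq := by
      by_cases hqv : q = v
      · subst hqv
        have hS₁last : S₁.getLast? = some a := by rw [hS₁.last_eq]; simp [ha]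
        rw [hDsplit] at hS₂
        rcases vwalk_cons_inv hS₂ with ⟨hst, _⟩ | ⟨k, S₃, _, hknb, hS₃, hS₂eq⟩
        · exact absurd hst hmv1
        have hk : k = h₀ := by rw [← hknb w₀ hw₀, hnb1 w₀ hw₀]
        rw [hk] at hS₂eq
        have hS₃' : VWalk G q (μ :: ρ' :: C) S₃ :=
          (vwalk_collapse_const hμ hconst).1 (by rw [hDsplit]; exact hS₃)
        rcases vwalk_cons_inv hS₃' with ⟨hst, _⟩ | ⟨k₂, S₄, _, hk₂nb, hS₄, hS₃eq⟩
        · exact absurd hst hmv2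
        have hk₂ : k₂ = h₀ := by rw [← hk₂nb w₀ hw₀, hnb2 w₀ hw₀]
        rw [hk₂] at hS₃eq
        have hnew1 : VWalk G q (upd μ :: C) S₄ := by rw [hμρeq]; exact hS₄
        have hnew2 : VWalk G q (M ++ C) S₄ := (vwalk_collapse_const hMlast hMcol).2 hnew1
        rw [hMsplit] at hnew2
        have hwn : VWalk G q (A ++ σ :: (M.tail ++ C)) (S₁ ++ S₄.tail) :=
          vwalk_glue_mpr A hS₁ hnew2
        refine ⟨S₁ ++ S₄.tail, by rw [hMsplit]; exact hwn, ?_⟩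
        have hS₄head : S₄ = a :: S₄.tail := by
          rw [hac, hc]
          exact eq_cons_head (by rw [hS₄.head_eq]; rfl)
        have hS₁eq : S₁ = S₁.dropLast ++ [a] := list_eq_dropLast hS₁last
        have step1 : RStep Sq (S₁ ++ h₀ :: S₄) := by
          refine Or.inl ⟨S₁, S₄, h₀, μ q, ?_, by simp⟩
          rw [hSqEq, hS₂eq, hS₃eq]
          simp
        have step2 : RStep (S₁ ++ h₀ :: S₄) (S₁ ++ S₄.tail) := by
          refine Or.inl ⟨S₁.dropLast, S₄.tail, a, h₀, ?_, ?_⟩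
          · conv_lhs => rw [hS₁eq, hS₄head]
            simp
          · conv_lhs => rw [hS₁eq]
        exact (PiEq.of_rstep step2).symm.trans (PiEq.of_rstep step1).symm
      · by_cases hqadj : G.UAdj v q
        · have hqcol : ∀ ρ₁ ∈ σ :: D, ρ₁ q = h₀ := by
            intro ρ₁ hρ₁
            rcases List.mem_cons.1 hρ₁ with rfl | h
            · exact hnb1 q hqadj
            · exact hDnb q hqadj ρ₁ h
          have hσDlast : (σ :: D).getLast? = some μ := by
            rw [getLast?_cons_of_ne_nil _ hDne]; exact hμ
          have hS₂' : VWalk G q (μ :: ρ' :: C) S₂ :=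
            (vwalk_collapse_const hσDlast hqcol).1 (by
              rw [show (σ :: D) ++ ρ' :: C = σ :: (D ++ ρ' :: C) by simp]
              exact hS₂)
          have hstμρ : μ q = ρ' q := hρ'upd q hqv
          have hS₂'' : VWalk G q (ρ' :: C) S₂ := (vwalk_stay_collapse hstμρ).1 hS₂'
          have hnew1 : VWalk G q (upd μ :: C) S₂ := by rw [hμρeq]; exact hS₂''
          have hnew2 : VWalk G q (M ++ C) S₂ :=
            (vwalk_collapse_const (v := q) hMlast (fun ρ₁ h => hMnb q hqadj ρ₁ h)).2 hnew1
          rw [hMsplit] at hnew2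
          refine ⟨S₁ ++ S₂.tail, ?_, by rw [← hSqEq]; exact PiEq.rfl _⟩
          rw [hMsplit]
          exact vwalk_glue_mpr A hS₁ hnew2
        · have hF : List.Forall₂ (fun σ₁ σ₂ => σ₁ q = σ₂ q ∧ ∀ w, G.UAdj q w → σ₁ w = σ₂ w)
              σs (A ++ σ :: (M ++ ρ' :: C)) := by
            rw [hEq]
            refine forall₂_append' (forall₂_refl' (fun x _ => ⟨rfl, fun _ _ => rfl⟩)) ?_
            refine List.Forall₂.cons ⟨rfl, fun _ _ => rfl⟩ ?_
            refine forall₂_append' ?_ (forall₂_refl' (fun x _ => ⟨rfl, fun _ _ => rfl⟩))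
            refine forall₂_map_self _ ?_
            intro ρ₁ _
            refine ⟨(Function.update_of_ne hqv _ _).symm, ?_⟩
            intro w hw
            have hwv : w ≠ v := by
              rintro rfl
              exact hqadj hw.symm'
            exact (Function.update_of_ne hwv _ _).symm
          have hW4 : VWalk G q (A ++ σ :: (M ++ ρ' :: C)) Sq := vwalk_ext hSq hF
          rw [hMsplit] at hW4
          have hW5 : VWalk G q (A ++ σ :: (M.tail ++ ρ' :: C)) Sq :=
            (vwalk_dup A σ _ _).1 hW4
          rw [← hMsplit] at hW5
          have hshape : A ++ (M ++ ρ' :: C) = (A ++ M.dropLast) ++ ρ' :: ρ' :: C := by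
            conv_lhs => rw [hMdrop]
            simp
          have hshape2 : A ++ (M ++ C) = (A ++ M.dropLast) ++ ρ' :: C := by
            conv_lhs => rw [hMdrop]
            simp
          refine ⟨Sq, ?_, PiEq.rfl _⟩
          rw [hshape2]
          refine (vwalk_dup (A ++ M.dropLast) ρ' C Sq).1 ?_
          rw [← hshape]
          exact hW5
    obtain ⟨Sq', hwalk, hpi⟩ := hWALK
    refine ⟨A ++ (M ++ C), Sq', ?_,
      hmemnew C (fun ρ₁ h => hhom ρ₁ (by rw [hEq]; simp [h])), ?_, ?_,
      hheadnew' C, ?_, hwalk, hpi⟩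
    · rw [hEq]
      simp [hM]
    · refine List.isChain_append.2 ⟨hchA, ?_, hjA C UC hjAσ⟩
      refine List.isChain_append.2 ⟨hMchUC, (List.isChain_cons.1 hUCρC).2, ?_⟩
      intro x hx y hy
      rw [hMlast] at hx
      simp at hx
      subst hx
      rw [hμρeq]
      exact (List.isChain_cons.1 hUCρC).1 y hy
    · show (A ++ (M ++ C)).Chain' _
      refine List.isChain_append.2 ⟨hmoA, ?_, hjA C _ hjmAσ⟩
      refine List.isChain_append.2 ⟨hMchMono, (List.isChain_cons.1 hMρC).2, ?_⟩
      intro x hx y hy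
      rw [hMlast] at hx
      simp at hx
      subst hx
      rw [hμρeq]
      exact (List.isChain_cons.1 hMρC).1 y hy
    · rw [List.getLast?_append_of_ne_nil _ (by simp [hMne])]
      cases C with
      | nil =>
        rw [List.append_nil, hMlast, hμρeq]
        simpa using hlastC
      | cons c₀ C' =>
        rw [List.getLast?_append_of_ne_nil _ (by simp)]
        rw [getLast?_cons_of_ne_nil _ (by simp)] at hlastC
        exact hlastC
  · -- `a ≠ c` : merge the two moves of `v` into one
    have hupdv : ∀ ρ₁ : V → X, upd ρ₁ v = a := fun ρ₁ => Function.update_self _ _ _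
    have hUCupd : UC (upd μ) ρ' := by
      refine ⟨v, ?_, ?_⟩
      · show upd μ v ≠ ρ' v
        rw [hupdv]
        exact hac
      · intro u hu
        by_cases huv : u = v
        · exact huv
        · refine absurd ?_ hu
          show upd μ u = ρ' u
          rw [show upd μ u = μ u from Function.update_of_ne huv _ _]
          exact hρ'upd u huv
    have hWALK : ∃ Sq', VWalk G q (A ++ (M ++ ρ' :: C)) Sq' ∧ PiEq Sq' Sq := by
      by_cases hqv : q = v
      · subst hqv
        rw [hDsplit] at hS₂
        rcases vwalk_cons_inv hS₂ with ⟨hst, _⟩ | ⟨k, S₃, _, hknb, hS₃, hS₂eq⟩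
        · exact absurd hst hmv1
        have hk : k = h₀ := by rw [← hknb w₀ hw₀, hnb1 w₀ hw₀]
        rw [hk] at hS₂eq
        have hS₃' : VWalk G q (μ :: ρ' :: C) S₃ :=
          (vwalk_collapse_const hμ hconst).1 (by rw [hDsplit]; exact hS₃)
        rcases vwalk_cons_inv hS₃' with ⟨hst, _⟩ | ⟨k₂, S₄, _, hk₂nb, hS₄, hS₃eq⟩
        · exact absurd hst hmv2
        have hk₂ : k₂ = h₀ := by rw [← hk₂nb w₀ hw₀, hnb2 w₀ hw₀]
        rw [hk₂] at hS₃eq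
        have hS₄' : VWalk G q (upd μ :: ρ' :: C) (a :: h₀ :: S₄) := by
          have h' : VWalk G q (upd μ :: ρ' :: C) (upd μ q :: h₀ :: S₄) := by
            refine VWalk.move h₀ ?_ ?_ hS₄
            · show upd μ q ≠ ρ' q
              rw [hupdv]
              exact hac
            · intro w hw
              have hwv : w ≠ q := by
                rintro rfl
                rcases hw with h | h <;> exact hGll _ h
              rw [show upd μ w = μ w from Function.update_of_ne hwv _ _]
              exact hnb2 w hw
          rw [hupdv μ] at h'
          exact h'
        have hnew2 : VWalk G q (M ++ ρ' :: C) (a :: h₀ :: S₄) :=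
          (vwalk_collapse_const hMlast hMcol).2 hS₄'
        rw [hMsplit] at hnew2
        have hwn : VWalk G q (A ++ σ :: (M.tail ++ ρ' :: C)) (S₁ ++ (h₀ :: S₄)) :=
          vwalk_glue_mpr A hS₁ hnew2
        refine ⟨S₁ ++ h₀ :: S₄, by rw [hMsplit]; exact hwn, ?_⟩
        have step1 : RStep Sq (S₁ ++ h₀ :: S₄) := by
          refine Or.inl ⟨S₁, S₄, h₀, μ q, ?_, by simp⟩
          rw [hSqEq, hS₂eq, hS₃eq]
          simp
        exact (PiEq.of_rstep step1).symm
      · by_cases hqadj : G.UAdj v q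
        · have hqcol : ∀ ρ₁ ∈ σ :: D, ρ₁ q = h₀ := by
            intro ρ₁ hρ₁
            rcases List.mem_cons.1 hρ₁ with rfl | h
            · exact hnb1 q hqadj
            · exact hDnb q hqadj ρ₁ h
          have hσDlast : (σ :: D).getLast? = some μ := by
            rw [getLast?_cons_of_ne_nil _ hDne]; exact hμ
          have hS₂' : VWalk G q (μ :: ρ' :: C) S₂ :=
            (vwalk_collapse_const hσDlast hqcol).1 (by
              rw [show (σ :: D) ++ ρ' :: C = σ :: (D ++ ρ' :: C) by simp]
              exact hS₂)
          have hstμρ : μ q = ρ' q := hρ'upd q hqv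
          have hS₂'' : VWalk G q (ρ' :: C) S₂ := (vwalk_stay_collapse hstμρ).1 hS₂'
          have hnew1 : VWalk G q (upd μ :: ρ' :: C) S₂ := by
            refine (vwalk_stay_collapse ?_).2 hS₂''
            rw [show upd μ q = μ q from Function.update_of_ne hqv _ _]
            exact hstμρ
          have hnew2 : VWalk G q (M ++ ρ' :: C) S₂ :=
            (vwalk_collapse_const (v := q) hMlast (fun ρ₁ h => hMnb q hqadj ρ₁ h)).2 hnew1
          rw [hMsplit] at hnew2
          refine ⟨S₁ ++ S₂.tail, ?_, by rw [← hSqEq]; exact PiEq.rfl _⟩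
          rw [hMsplit]
          exact vwalk_glue_mpr A hS₁ hnew2
        · have hF : List.Forall₂ (fun σ₁ σ₂ => σ₁ q = σ₂ q ∧ ∀ w, G.UAdj q w → σ₁ w = σ₂ w)
              σs (A ++ σ :: (M ++ ρ' :: C)) := by
            rw [hEq]
            refine forall₂_append' (forall₂_refl' (fun x _ => ⟨rfl, fun _ _ => rfl⟩)) ?_
            refine List.Forall₂.cons ⟨rfl, fun _ _ => rfl⟩ ?_
            refine forall₂_append' ?_ (forall₂_refl' (fun x _ => ⟨rfl, fun _ _ => rfl⟩))
            refine forall₂_map_self _ ?_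
            intro ρ₁ _
            refine ⟨(Function.update_of_ne hqv _ _).symm, ?_⟩
            intro w hw
            have hwv : w ≠ v := by
              rintro rfl
              exact hqadj hw.symm'
            exact (Function.update_of_ne hwv _ _).symm
          have hW4 : VWalk G q (A ++ σ :: (M ++ ρ' :: C)) Sq := vwalk_ext hSq hF
          rw [hMsplit] at hW4
          have hW5 : VWalk G q (A ++ σ :: (M.tail ++ ρ' :: C)) Sq :=
            (vwalk_dup A σ _ _).1 hW4
          rw [← hMsplit] at hW5
          exact ⟨Sq, hW5, PiEq.rfl _⟩
    obtain ⟨Sq', hwalk, hpi⟩ := hWALK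
    refine ⟨A ++ (M ++ ρ' :: C), Sq', ?_,
      hmemnew (ρ' :: C) (fun ρ₁ h => hhom ρ₁ (by rw [hEq]; simp [h])), ?_, ?_,
      hheadnew' (ρ' :: C), ?_, hwalk, hpi⟩
    · rw [hEq]
      simp [hM]
    · refine List.isChain_append.2 ⟨hchA, ?_, hjA (ρ' :: C) UC hjAσ⟩
      refine List.isChain_append.2 ⟨hMchUC, hUCρC, ?_⟩
      intro x hx y hy
      rw [hMlast] at hx
      simp at hx
      simp at hy
      subst hx
      subst hy
      exact hUCupd
    · show (A ++ (M ++ ρ' :: C)).Chain' _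
      refine List.isChain_append.2 ⟨hmoA, ?_, hjA (ρ' :: C) _ hjmAσ⟩
      refine List.isChain_append.2 ⟨hMchMono, hMρC, ?_⟩
      intro x hx y hy
      rw [hMlast] at hx
      simp at hx
      simp at hy
      subst hx
      subst hy
      intro u hu
      have huv : u = v := by
        by_contra h
        refine hu ?_
        show upd μ u = ρ' u
        rw [show upd μ u = μ u from Function.update_of_ne h _ _]
        exact hρ'upd u h
      subst huv
      refine ⟨h₀, fun z hz => ?_⟩
      have hzv : z ≠ u := by
        rintro rfl
        rcases hz with h | h <;> exact hGll _ h
      rw [show upd μ z = μ z from Function.update_of_ne hzv _ _]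
      exact hnb2 z hz
    · rw [List.getLast?_append_of_ne_nil _ (by simp [hMne]),
        List.getLast?_append_of_ne_nil _ (by simp)]
      exact hlastC

end Surgery2
/-! ### Backward direction and the main theorem -/

section Back
variable {V X : Type} {G : Dgraph V} {H : Dgraph X}

theorem homs_step (hGll : G.Loopless) :
    ∀ {σs : List (V → X)},
      (∀ σ₀, σs.head? = some σ₀ → IsHom G H σ₀) →
      σs.Chain' UC → MonoNbhd G σs →
      (∀ v : V, TypeIN G v → σs.Chain' (fun σ σ' => σ v ≠ σ' v → ∀ h₁,
        (∀ w, G.UAdj v w → σ w = h₁) → H.Adj h₁ (σ v) ∧ H.Adj h₁ (σ' v))) →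
      (∀ v : V, TypeOUT G v → σs.Chain' (fun σ σ' => σ v ≠ σ' v → ∀ h₁,
        (∀ w, G.UAdj v w → σ w = h₁) → H.Adj (σ v) h₁ ∧ H.Adj (σ' v) h₁)) →
      ∀ σ ∈ σs, IsHom G H σ := by
  intro σs
  induction σs with
  | nil => intro _ _ _ _ _ σ hσ; simp at hσ
  | cons σ₁ rest ih =>
    intro hhd hch hmono hIN hOUT σ₂ hσ₂
    have hσ₁hom : IsHom G H σ₁ := hhd σ₁ rfl
    rcases List.mem_cons.1 hσ₂ with rfl | hmem
    · exact hσ₁hom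
    cases rest with
    | nil => simp at hmem
    | cons σ' rest' =>
      have hmono' : (σ₁ :: σ' :: rest').Chain'
          (fun σ σ' => ∀ v, σ v ≠ σ' v → ∃ h, ∀ w, G.UAdj v w → σ w = h) := hmono
      have hσ'hom : IsHom G H σ' := by
        by_cases hdiff : ∃ u, σ₁ u ≠ σ' u
        · obtain ⟨u₀, hu₀⟩ := hdiff
          obtain ⟨h, hh⟩ := (List.isChain_cons_cons.1 hmono').1 u₀ hu₀
          have hUC1 : UC σ₁ σ' := (List.isChain_cons_cons.1 hch).1
          intro x y hxy
          rcases eq_or_ne y u₀ with rfl | hyu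
          · have hxy' : x ≠ y := fun hc => hGll y (hc ▸ hxy)
            obtain ⟨hA1, hA2⟩ :=
              (List.isChain_cons_cons.1 (hIN y ⟨x, hxy⟩)).1 hu₀ h hh
            have hx' : σ' x = h := by
              rw [← uc_stay hUC1 hu₀ hxy']
              exact hh x (Or.inr hxy)
            rw [hx']
            exact hA2
          · rcases eq_or_ne x u₀ with rfl | hxu
            · obtain ⟨hA1, hA2⟩ :=
                (List.isChain_cons_cons.1 (hOUT x ⟨y, hxy⟩)).1 hu₀ h hh
              have hy' : σ' y = h := by
                rw [← uc_stay hUC1 hu₀ hyu]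
                exact hh y (Or.inl hxy)
              rw [hy']
              exact hA2
            · rw [← uc_stay hUC1 hu₀ hxu, ← uc_stay hUC1 hu₀ hyu]
              exact hσ₁hom hxy
        · push_neg at hdiff
          have : σ' = σ₁ := funext fun u => (hdiff u).symm
          rw [this]
          exact hσ₁hom
      refine ih (fun σ₀ h => by simp at h; rw [← h]; exact hσ'hom) hch.tail hmono.tail
        (fun v hv => (hIN v hv).tail) (fun v hv => (hOUT v hv).tail) σ₂ hmem

theorem no_scp_real (hGll : G.Loopless) (hHll : H.Loopless) (hGconn : G.WConn)
    (hnbr : ∀ w : V, ∃ w', G.UAdj w w')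
    {σs : List (V → X)} {α β : V → X} {q : V} {Sq Q : List X}
    (hhom : ∀ σ ∈ σs, IsHom G.usym H.usym σ)
    (hch : σs.Chain' UC) (hmono : MonoNbhd G σs)
    (hhead : σs.head? = some α) (hlast : σs.getLast? = some β)
    (hSq : VWalk G q σs Sq) (hpi : PiEq Sq Q)
    (hQhead : Q.head? = some (α q))
    (hOC : OrientCompatible G H α β q Q)
    (hα : IsHom G H α)
    (hnoscp : ∀ v, ¬ SCP G v σs) :
    MRealizable G H α β q Q := by
  have hne : σs ≠ [] := by rintro rfl; simp at hhead
  have hred : ∀ (v : V) (Sv : List X), VWalk G v σs Sv → Red Sv := by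
    intro v Sv hSv
    by_contra hnr
    obtain ⟨w₁, hw₁⟩ := hnbr v
    exact hnoscp v (scp_of_not_red hGll hHll hw₁ hSv hhom hch hnr)
  have hSqhd : Sq.head? = some (α q) := by rw [hSq.head_eq, hhead]; rfl
  have hZ : ∀ v : V, ∃ Sv, VWalk G v σs Sv ∧ Zigzag G H v Sv := by
    intro v
    obtain ⟨Sv, hSv⟩ := vwalk_exists v σs hne hmono
    obtain ⟨Wl, hWl⟩ := hGconn q v
    have hconj := vwalk_conj hGll q hch hmono hhead hlast hSq hnbr Wl v hWl Sv hSv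
    have hcongr : PiEq (conj α β Wl Sq) (conj α β Wl Q) :=
      conj_congr α β hWl.2.1 hSqhd hQhead hpi
    have hpc : PiEq (conj α β Wl Q) Sv := (hconj.trans hcongr).symm
    exact ⟨Sv, hSv, hOC v Wl hWl Sv ((isReduced_iff_red Sv).2 (hred v Sv hSv)) hpc⟩
  have hINch : ∀ v : V, TypeIN G v → σs.Chain' (fun σ σ' => σ v ≠ σ' v → ∀ h₁,
      (∀ w, G.UAdj v w → σ w = h₁) → H.Adj h₁ (σ v) ∧ H.Adj h₁ (σ' v)) := by
    intro v hv
    obtain ⟨Sv, hSv, hZv⟩ := hZ v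
    exact vwalk_moves_in (hnbr v) hSv ((compat_iff Sv).1.1 (hZv.1 hv))
  have hOUTch : ∀ v : V, TypeOUT G v → σs.Chain' (fun σ σ' => σ v ≠ σ' v → ∀ h₁,
      (∀ w, G.UAdj v w → σ w = h₁) → H.Adj (σ v) h₁ ∧ H.Adj (σ' v) h₁) := by
    intro v hv
    obtain ⟨Sv, hSv, hZv⟩ := hZ v
    exact vwalk_moves_out (hnbr v) hSv ((compat_iff Sv).2.1 (hZv.2 hv))
  have hhomH : ∀ σ ∈ σs, IsHom G H σ :=
    homs_step hGll (fun σ₀ h => by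
      rw [hhead] at h
      rw [← Option.some.inj h]
      exact hα) hch hmono hINch hOUTch
  exact ⟨σs, Sq, ⟨hne, hhomH, hch⟩, hhead, hlast, hmono, hSq, hpi⟩

theorem backward_main (hGll : G.Loopless) (hHll : H.Loopless) (hGconn : G.WConn)
    (hnbr : ∀ w : V, ∃ w', G.UAdj w w')
    {α β : V → X} {q : V} {Q : List X}
    (hα : IsHom G H α) (hQhead : Q.head? = some (α q))
    (hOC : OrientCompatible G H α β q Q) :
    ∀ n : ℕ, ∀ σs : List (V → X), σs.length ≤ n →
      (∀ σ ∈ σs, IsHom G.usym H.usym σ) → σs.Chain' UC → MonoNbhd G σs →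
      σs.head? = some α → σs.getLast? = some β →
      ∀ Sq : List X, VWalk G q σs Sq → PiEq Sq Q →
      MRealizable G H α β q Q := by
  intro n
  induction n with
  | zero =>
    intro σs hlen _ _ _ hhead _ _ _ _
    rw [List.length_eq_zero_iff.1 (Nat.le_zero.1 hlen)] at hhead
    simp at hhead
  | succ n ihn =>
    intro σs hlen hhom hch hmono hhead hlast Sq hSq hpi
    by_cases hscp : ∃ v, SCP G v σs
    · classical
      set P : ℕ → Prop := fun d => ∃ (v : V) (A D C : List (V → X)) (σ ρ' τ μ : V → X) (h₀ : X),
          σs = A ++ σ :: (D ++ ρ' :: C) ∧ D.head? = some τ ∧ D.getLast? = some μ ∧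
          σ v ≠ τ v ∧ (∀ ρ ∈ D, ρ v = τ v) ∧ μ v ≠ ρ' v ∧
          (∀ w, G.UAdj v w → σ w = h₀) ∧ (∀ w, G.UAdj v w → μ w = h₀) ∧ D.length = d
        with hP
      have hPex : ∃ d, P d := by
        obtain ⟨v, A, D, C, σ, ρ', τ, μ, h₀, h1, h2, h3, h4, h5, h6, h7, h8⟩ := hscp
        exact ⟨D.length, v, A, D, C, σ, ρ', τ, μ, h₀, h1, h2, h3, h4, h5, h6, h7, h8, rfl⟩
      haveI : DecidablePred P := Classical.decPred P
      obtain ⟨v, A, D, C, σ, ρ', τ, μ, h₀, hEq, hτ, hμ, hmv1, hconst, hmv2, hnb1, hnb2, hd⟩ :=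
        Nat.find_spec hPex
      have hmin : ∀ (v' : V) (A' D' C' : List (V → X)) (σ₁ ρ₁ τ₁ μ₁ : V → X) (h₁ : X),
          σs = A' ++ σ₁ :: (D' ++ ρ₁ :: C') →
          D'.head? = some τ₁ → D'.getLast? = some μ₁ →
          σ₁ v' ≠ τ₁ v' → (∀ ρ ∈ D', ρ v' = τ₁ v') → μ₁ v' ≠ ρ₁ v' →
          (∀ w, G.UAdj v' w → σ₁ w = h₁) → (∀ w, G.UAdj v' w → μ₁ w = h₁) →
          D.length ≤ D'.length := by
        intro v' A' D' C' σ₁ ρ₁ τ₁ μ₁ h₁ e1 e2 e3 e4 e5 e6 e7 e8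
        have hPd : P D'.length :=
          ⟨v', A', D', C', σ₁, ρ₁, τ₁, μ₁, h₁, e1, e2, e3, e4, e5, e6, e7, e8, rfl⟩
        have := Nat.find_min' hPex hPd
        omega
      have hDnb := scp_min_nbhd hGll hch hmono hEq hτ hμ hmv1 hconst hmv2 hnb1 hnb2 hmin
      obtain ⟨σs', Sq', hlen', hhom', hch', hmono', hhead', hlast', hSq', hpi'⟩ :=
        surgery (H := H) hGll hHll hhom hch hmono hhead hlast hSq (hnbr v)
          hEq hτ hμ hmv1 hconst hmv2 hnb1 hnb2 hDnb
      exact ihn σs' (by omega) hhom' hch' hmono' hhead' hlast' Sq' hSq' (hpi'.trans hpi)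
    · push_neg at hscp
      exact no_scp_real hGll hHll hGconn hnbr hhom hch hmono hhead hlast hSq hpi
        hQhead hOC hα hscp

end Back
end HRecoloring

open HRecoloring
/-- For loopless weakly connected digraphs `G, H` and a walk `Q` that is
`\bar H`-realizable for `α, β, q`, the walk `Q` is `H`-realizable iff it is
orientation compatible. -/
theorem statement6 {V X : Type} [Fintype V] [Fintype X]
    (G : Dgraph V) (H : Dgraph X)
    (hGll : G.Loopless) (hHll : H.Loopless)
    (hGconn : G.WConn) (hHconn : H.WConn)
    (α β : V → X) (hα : IsHom G H α) (hβ : IsHom G H β)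
    (q : V) (Q : List X) (hQ : IsWalk H (α q) (β q) Q) (hQred : IsReduced Q)
    (hbar : MRealizable G.usym H.usym α β q Q) :
    MRealizable G H α β q Q ↔ OrientCompatible G H α β q Q := by
  have hQhead : Q.head? = some (α q) := hQ.2.1
  by_cases harcs : ∃ u w, G.Adj u w
  · obtain ⟨u₀, w₀', harc⟩ := harcs
    have hnbr : ∀ v : V, ∃ w, G.UAdj v w := by
      intro v
      obtain ⟨l, hl⟩ := hGconn v u₀
      obtain ⟨hne, hhd, hlast, hchain⟩ := hl
      cases l with
      | nil => exact absurd rfl hne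
      | cons x t =>
        have hxv : x = v := by simpa using hhd
        cases t with
        | nil =>
          have hxu : x = u₀ := by simpa using hlast
          refine ⟨w₀', ?_⟩
          rw [← hxv, hxu]
          exact Or.inl harc
        | cons y t' =>
          refine ⟨y, ?_⟩
          rw [← hxv]
          exact (List.isChain_cons_cons.1 hchain).1
    constructor
    · exact forward_main hGll hHll hnbr hQhead
    · intro hOC
      obtain ⟨σs, Sq, ⟨hne, hhombar, hch⟩, hhead, hlast, hmonoU, hSqU, hpi⟩ := hbar
      exact backward_main hGll hHll hGconn hnbr hα hQhead hOC σs.length σs le_rfl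
        hhombar hch ((mono_usym σs).1 hmonoU) hhead hlast Sq (vwalk_usym.1 hSqU) hpi
  · push_neg at harcs
    constructor
    · intro _
      intro v Wl hWl S hSred hSpi
      exact ⟨fun hIN => absurd hIN.choose_spec (harcs _ _),
        fun hOUT => absurd hOUT.choose_spec (harcs _ _)⟩
    · intro _
      obtain ⟨σs, Sq, ⟨hne, hhombar, hch⟩, hhead, hlast, hmonoU, hSqU, hpi⟩ := hbar
      exact ⟨σs, Sq, ⟨hne, fun σ _ u w huw => absurd huw (harcs u w), hch⟩,
        hhead, hlast, (mono_usym σs).1 hmonoU, vwalk_usym.1 hSqU, hpi⟩
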